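/- arXiv:2406.11648 — 6 statements merged into one kernel-verified Lean document; each statement's English description precedes it below -/
import Mathlib

section
/- For n ≥ 3, let M_n be the n×n real matrix with M_{1,1} = 1, M_{2,2} = 1, M_{1,3} = 1, M_{3,1} = -1, M_{2,3} = 1, M_{3,2} = -1, and for 3 ≤ i ≤ n-1: M_{i,i} = 1, M_{i,i+1} = 1, M_{i+1,i} = -1, M_{n,n} = 1, with all other entries 0. Then det(M_n) = ℓ_{n-1}, the (n-1)-th Lucas number. -/
def Mmat (n : ℕ) : Matrix (Fin n) (Fin n) ℝ :=
  Matrix.of (fun i j : Fin n =>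
      if i = j then (1 : ℝ)
      else if (i.val = 0 ∧ j.val = 2) ∨ (i.val = 1 ∧ j.val = 2) ∨
              (2 ≤ i.val ∧ j.val = i.val + 1) then 1
      else if (j.val = 0 ∧ i.val = 2) ∨ (j.val = 1 ∧ i.val = 2) ∨
              (2 ≤ j.val ∧ i.val = j.val + 1) then -1
      else 0)

lemma Mmat_apply (n : ℕ) (i j : Fin n) : Mmat n i j =
      (if i = j then (1 : ℝ)
      else if (i.val = 0 ∧ j.val = 2) ∨ (i.val = 1 ∧ j.val = 2) ∨
              (2 ≤ i.val ∧ j.val = i.val + 1) then 1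
      else if (j.val = 0 ∧ i.val = 2) ∨ (j.val = 1 ∧ i.val = 2) ∨
              (2 ≤ j.val ∧ i.val = j.val + 1) then -1
      else 0) := rfl

lemma Mmat_eq_zero (n : ℕ) (i j : Fin n) (h1 : i ≠ j)
    (h2 : ¬((i.val = 0 ∧ j.val = 2) ∨ (i.val = 1 ∧ j.val = 2) ∨ (2 ≤ i.val ∧ j.val = i.val + 1)))
    (h3 : ¬((j.val = 0 ∧ i.val = 2) ∨ (j.val = 1 ∧ i.val = 2) ∨ (2 ≤ j.val ∧ i.val = j.val + 1))) :
    Mmat n i j = 0 := by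
  rw [Mmat_apply, if_neg h1, if_neg h2, if_neg h3]

lemma sub1 (m : ℕ) : (Mmat (m+1)).submatrix Fin.castSucc Fin.castSucc = Mmat m := by
  ext i j
  simp only [Matrix.submatrix_apply, Mmat_apply, Fin.coe_castSucc, Fin.castSucc_inj]

lemma rec4 (n : ℕ) : (Mmat (n+4)).det = (Mmat (n+3)).det + (Mmat (n+2)).det := by
  have hlt : (n+2) < n+4 := by omega
  set j2 : Fin (n+4) := ⟨n+2, hlt⟩ with hj2
  have hne : j2 ≠ Fin.last (n+3) := by simp [hj2, Fin.ext_iff]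
  have hj2v : (j2 : ℕ) = n + 2 := rfl
  have hcol : ∀ j : Fin (n+3), (j2.succAbove j).val = if j.val < n+2 then j.val else j.val + 1 := by
    intro j
    rcases lt_or_ge j.val (n+2) with h | h
    · rw [Fin.succAbove_of_castSucc_lt _ _ (by simpa [Fin.lt_def, hj2] using h), if_pos h]
      rfl
    · rw [Fin.succAbove_of_le_castSucc _ _ (by simpa [Fin.le_def, hj2] using h), if_neg (not_lt.2 h)]
      rfl
  rw [Matrix.det_succ_row (Mmat (n+4)) (Fin.last (n+3))]
  rw [← Finset.sum_subset (Finset.subset_univ ({j2, Fin.last (n+3)} : Finset (Fin (n+4))))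
      (fun x _ hx => by
        simp only [Finset.mem_insert, Finset.mem_singleton, not_or] at hx
        have hx1 : x.val ≠ n + 2 := fun h => hx.1 (Fin.ext h)
        have hx2 : x.val ≠ n + 3 := fun h => hx.2 (Fin.ext h)
        have hxlt := x.isLt
        rw [Mmat_eq_zero]
        · ring
        · intro h; apply hx2; rw [← h, Fin.val_last]
        · simp only [Fin.val_last]; omega
        · simp only [Fin.val_last]; omega)]
  rw [Finset.sum_pair hne]
  have e1 : Mmat (n+4) (Fin.last (n+3)) j2 = -1 := by
    rw [Mmat_apply, if_neg (by simp [Fin.ext_iff, hj2]),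
        if_neg (fun h => by simp only [Fin.val_last, hj2v] at h; omega),
        if_pos (Or.inr (Or.inr ⟨by rw [hj2v]; omega, by rw [Fin.val_last, hj2v]⟩))]
  have e2 : Mmat (n+4) (Fin.last (n+3)) (Fin.last (n+3)) = 1 := by
    rw [Mmat_apply, if_pos rfl]
  have hB : ((Mmat (n+4)).submatrix (Fin.last (n+3)).succAbove j2.succAbove).det
      = (Mmat (n+2)).det := by
    rw [Fin.succAbove_last]
    set B := (Mmat (n+4)).submatrix Fin.castSucc j2.succAbove with hb
    rw [Matrix.det_succ_column B (Fin.last (n+2))]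
    rw [Finset.sum_eq_single (Fin.last (n+2))
      (fun i _ hine => by
        have hiv : i.val < n + 2 := by
          have := i.isLt
          rcases Nat.lt_or_ge i.val (n+2) with h | h
          · exact h
          · exact absurd (Fin.ext (by omega : i.val = n+2)) hine
        have hcv : (j2.succAbove (Fin.last (n+2))).val = n + 3 := by
          rw [hcol]; simp
        have hz : B i (Fin.last (n+2)) = 0 := by
          rw [hb, Matrix.submatrix_apply, Mmat_eq_zero]
          · intro h
            have := congrArg Fin.val h
            rw [hcv] at this
            simp only [Fin.coe_castSucc] at this
            omega
          · simp only [Fin.coe_castSucc, hcv]; omega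
          · simp only [Fin.coe_castSucc, hcv]; omega
        rw [hz]; ring)
      (fun h => absurd (Finset.mem_univ _) h)]
    have hBentry : B (Fin.last (n+2)) (Fin.last (n+2)) = 1 := by
      have hcv : (j2.succAbove (Fin.last (n+2))).val = n + 3 := by rw [hcol]; simp
      rw [hb, Matrix.submatrix_apply, Mmat_apply,
          if_neg (by intro h; have := congrArg Fin.val h; rw [hcv] at this; simp at this),
          if_pos (Or.inr (Or.inr ⟨by rw [Fin.coe_castSucc, Fin.val_last]; omega,
            by rw [hcv, Fin.coe_castSucc, Fin.val_last]⟩))]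
    have hmin : B.submatrix (Fin.last (n+2)).succAbove (Fin.last (n+2)).succAbove
        = Mmat (n+2) := by
      rw [Fin.succAbove_last]
      ext i j
      have hv : (j2.succAbove (Fin.castSucc j)).val = (j : ℕ) := by
        rw [hcol]; simp [j.isLt]
      rw [hb]
      simp only [Matrix.submatrix_apply, Mmat_apply, Fin.coe_castSucc, hv]
      congr 1
      · simp [Fin.ext_iff, hv]
    rw [hBentry, hmin, Fin.val_last]
    have : (-1 : ℝ) ^ ((n+2) + (n+2)) = 1 := Even.neg_one_pow ⟨n+2, rfl⟩
    rw [this]; ring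
  rw [e1, e2, hB, Fin.succAbove_last, sub1, Fin.val_last, hj2]
  have h1 : (-1 : ℝ) ^ ((n+3) + ((⟨n+2, hlt⟩ : Fin (n+4)) : ℕ)) = -1 :=
    Odd.neg_one_pow ⟨n+2, by simp; ring⟩
  have h2 : (-1 : ℝ) ^ ((n+3) + (n+3)) = 1 := Even.neg_one_pow ⟨n+3, rfl⟩
  rw [h1, h2]
  ring

lemma det2 : (Mmat 2).det = 1 := by
  rw [Matrix.det_fin_two]
  norm_num [Mmat_apply, Fin.ext_iff]

lemma det3 : (Mmat 3).det = 3 := by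
  rw [Matrix.det_fin_three]
  norm_num [Mmat_apply, Fin.ext_iff]

theorem det_caterpillar_eq_lucas (n : ℕ) (hn : 3 ≤ n)
    (l : ℕ → ℝ) (hl1 : l 1 = 1) (hl2 : l 2 = 3)
    (hl : ∀ k, 3 ≤ k → l k = l (k - 1) + l (k - 2)) :
    (Matrix.of (fun i j : Fin n =>
      if i = j then (1 : ℝ)
      else if (i.val = 0 ∧ j.val = 2) ∨ (i.val = 1 ∧ j.val = 2) ∨
              (2 ≤ i.val ∧ j.val = i.val + 1) then 1
      else if (j.val = 0 ∧ i.val = 2) ∨ (j.val = 1 ∧ i.val = 2) ∨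
              (2 ≤ j.val ∧ i.val = j.val + 1) then -1
      else 0)).det = l (n - 1) := by
  have key : ∀ k, (Mmat (k+3)).det = l (k+2) := by
    intro k
    induction k using Nat.strong_induction_on with
    | _ k ih =>
      match k with
      | 0 => rw [det3, hl2]
      | 1 =>
        rw [show (1 : ℕ) + 3 = 0 + 4 from rfl, rec4 0, det3, det2,
            hl 3 (by norm_num), hl2, hl1]
      | (m+2) =>
        have h5 : m + 2 + 3 = (m+1) + 4 := by omega
        rw [h5, rec4 (m+1), ih (m+1) (by omega), ih m (by omega),
            hl (m+4) (by omega), show m + 4 - 1 = m + 3 from rfl,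
            show m + 4 - 2 = m + 2 from rfl]
  obtain ⟨k, rfl⟩ : ∃ k, n = k + 3 := ⟨n - 3, by omega⟩
  exact key k
end

section
/- For n ≥ 3, let M_n be the n×n real matrix with M_{1,1} = 2, M_{i,i} = 1 for 2 ≤ i ≤ n, M_{i,i+1} = 1 and M_{i+1,i} = -1 for 1 ≤ i ≤ n-1, M_{1,n} = -1, M_{n,1} = 1, all other entries 0. Then det(M_n) = 2 f_{n+1} - 1 + (-1)^{n+1}, where f_k is the k-th Fibonacci number. -/
open Matrix

lemma val_succAbove {n : ℕ} (p : Fin (n+1)) (i : Fin n) :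
    ((p.succAbove i : Fin (n+1)) : ℕ) = if (i:ℕ) < (p:ℕ) then (i:ℕ) else (i:ℕ)+1 := by
  rw [Fin.succAbove]
  split_ifs with h h' h' <;> simp_all [Fin.lt_def]

/-- Tridiagonal continuant matrix: diag 1, super 1, sub -1. -/
def Tm (k : ℕ) : Matrix (Fin k) (Fin k) ℝ :=
  Matrix.of fun i j => if (i:ℕ) = j then 1 else if (j:ℕ) = i + 1 then 1
    else if (i:ℕ) = j + 1 then -1 else 0

lemma detTm : ∀ k, (Tm k).det = Nat.fib (k+1) := by
  intro k
  induction k using Nat.strong_induction_on with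
  | _ k ih =>
    match k, ih with
    | 0, _ => simp [Matrix.det_fin_zero]
    | 1, _ => simp [Matrix.det_fin_one, Tm]
    | (k+2), ih =>
      rw [Matrix.det_succ_row_zero, Fin.sum_univ_succ, Fin.sum_univ_succ]
      have hz : ∀ j : Fin k,
          (-1:ℝ) ^ (((j.succ.succ : Fin (k+2)) : ℕ)) * Tm (k+2) 0 j.succ.succ *
            ((Tm (k+2)).submatrix Fin.succ (Fin.succAbove j.succ.succ)).det = 0 := by
        intro j
        have hj := j.isLt
        have : Tm (k+2) 0 j.succ.succ = 0 := by
          simp only [Tm, Matrix.of_apply, Fin.val_succ, Fin.val_zero]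
          split_ifs <;> first | rfl | (exfalso; omega) | simp_all | omega
        rw [this]; ring
      rw [Finset.sum_eq_zero (fun j _ => hz j), add_zero]
      have h0 : (Tm (k+2)).submatrix Fin.succ (Fin.succAbove 0) = Tm (k+1) := by
        ext i j
        simp only [Matrix.submatrix_apply, Fin.succAbove_zero, Tm, Matrix.of_apply, Fin.val_succ]
        split_ifs <;> first | rfl | (exfalso; omega) | simp_all | omega
      have h1 : ((Tm (k+2)).submatrix Fin.succ (Fin.succAbove 1)).det = -(Nat.fib (k+1) : ℝ) := by
        rw [Matrix.det_succ_column_zero, Fin.sum_univ_succ]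
        have hz2 : ∀ i : Fin k,
            (-1:ℝ) ^ (((i.succ : Fin (k+1)) : ℕ)) *
              (Tm (k+2)).submatrix Fin.succ (Fin.succAbove 1) i.succ 0 *
              (((Tm (k+2)).submatrix Fin.succ (Fin.succAbove 1)).submatrix
                (Fin.succAbove i.succ) Fin.succ).det = 0 := by
          intro i
          have hi := i.isLt
          have hv : ((1 : Fin (k+2)) : ℕ) = 1 := rfl
          have : (Tm (k+2)).submatrix Fin.succ (Fin.succAbove 1) i.succ 0 = 0 := by
            simp only [Matrix.submatrix_apply, Tm, Matrix.of_apply, val_succAbove, Fin.val_succ,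
              Fin.val_zero, hv]
            split_ifs <;> first | rfl | (exfalso; omega) | simp_all | omega
          rw [this]; ring
        rw [Finset.sum_eq_zero (fun i _ => hz2 i), add_zero]
        have hsub : ((Tm (k+2)).submatrix Fin.succ (Fin.succAbove 1)).submatrix
            (Fin.succAbove 0) Fin.succ = Tm k := by
          ext i j
          have hi := i.isLt
          have hj := j.isLt
          have hv : ((1 : Fin (k+2)) : ℕ) = 1 := rfl
          simp only [Matrix.submatrix_apply, Fin.succAbove_zero, Tm, Matrix.of_apply,
            val_succAbove, Fin.val_succ, hv]
          split_ifs <;> first | rfl | (exfalso; omega) | simp_all | omega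
        have he : (Tm (k+2)).submatrix Fin.succ (Fin.succAbove 1) 0 0 = -1 := by
          have hv : ((1 : Fin (k+2)) : ℕ) = 1 := rfl
          simp only [Matrix.submatrix_apply, Tm, Matrix.of_apply, val_succAbove, hv,
            Fin.val_zero, Fin.val_succ]
          norm_num
        rw [hsub, he, ih k (by omega)]
        simp
      have e0 : Tm (k+2) 0 0 = 1 := by simp [Tm]
      have e1 : Tm (k+2) 0 1 = 1 := by
        simp only [Tm, Matrix.of_apply]
        norm_num
      simp only [Fin.succ_zero_eq_one]
      rw [h0, h1, e0, e1, ih (k+1) (by omega)]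
      have : Nat.fib (k+2+1) = Nat.fib (k+1) + Nat.fib (k+2) := by
        rw [Nat.fib_add_two]
      rw [this]
      have v0 : ((0 : Fin (k+2)) : ℕ) = 0 := rfl
      have v1 : ((1 : Fin (k+2)) : ℕ) = 1 := rfl
      rw [v0, v1]
      push_cast
      ring

def Cm (k : ℕ) : Matrix (Fin k) (Fin k) ℝ :=
  Matrix.of fun r j => if (j:ℕ) = r then -1 else if (j:ℕ) = (r:ℕ)+1 then 1
    else if (j:ℕ) = (r:ℕ)+2 then 1 else 0

def Lm (k : ℕ) : Matrix (Fin k) (Fin k) ℝ :=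
  Matrix.of fun r j => if (j:ℕ) = r then 1 else if (r:ℕ) = (j:ℕ)+1 then 1
    else if (r:ℕ) = (j:ℕ)+2 then -1 else 0

lemma detCm (k : ℕ) : (Cm k).det = (-1)^k := by
  rw [Matrix.det_of_upperTriangular]
  · have : ∀ i : Fin k, Cm k i i = -1 := by
      intro i; simp [Cm]
    rw [Finset.prod_congr rfl (fun i _ => this i)]
    simp
  · intro i j hlt
    have : (j:ℕ) < (i:ℕ) := hlt
    simp only [Cm, Matrix.of_apply]
    split_ifs <;> first | rfl | (exact (‹False›).elim) | (exfalso; omega) | simp_all | omega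

lemma detLm (k : ℕ) : (Lm k).det = 1 := by
  rw [Matrix.det_of_lowerTriangular]
  · have : ∀ i : Fin k, Lm k i i = 1 := by
      intro i; simp [Lm]
    rw [Finset.prod_congr rfl (fun i _ => this i)]
    simp
  · intro i j hlt
    have : (i:ℕ) < (j:ℕ) := hlt
    simp only [Lm, Matrix.of_apply]
    split_ifs <;> first | rfl | (exact (‹False›).elim) | (exfalso; omega) | simp_all | omega

def Bm (m : ℕ) : Matrix (Fin (m+2)) (Fin (m+2)) ℝ :=
  Matrix.of fun r j => if (r:ℕ) = 0 then
      (if (j:ℕ) = 0 then 1 else if (j:ℕ) = m+1 then -1 else 0)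
    else if (r:ℕ) = j then 1 else if (j:ℕ) = (r:ℕ)+1 then 1
    else if (r:ℕ) = (j:ℕ)+1 then -1 else 0

lemma detBm (m : ℕ) (hT : (Tm (m+1)).det = (Nat.fib (m+2) : ℝ)) :
    (Bm m).det = (Nat.fib (m+2) : ℝ) - 1 := by
  rw [Matrix.det_succ_row_zero, Fin.sum_univ_succ, Fin.sum_univ_castSucc]
  have hmid : ∀ j : Fin m, Bm m 0 (j.castSucc.succ) = 0 := by
    intro j
    have hj := j.isLt
    simp only [Bm, Matrix.of_apply, Fin.val_succ, Fin.coe_castSucc, Fin.val_zero]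
    split_ifs <;> first | rfl | (exact (‹False›).elim) | (exfalso; omega) | simp_all | omega
  have hz : ∀ j : Fin m, (-1:ℝ) ^ ((j.castSucc.succ : Fin (m+2)) : ℕ) *
      Bm m 0 j.castSucc.succ *
      ((Bm m).submatrix Fin.succ (Fin.succAbove j.castSucc.succ)).det = 0 := by
    intro j; rw [hmid j]; ring
  rw [Finset.sum_eq_zero (fun j _ => hz j), zero_add]
  have h00 : (Bm m).submatrix Fin.succ (Fin.succAbove 0) = Tm (m+1) := by
    ext i j
    have hi := i.isLt
    have hj := j.isLt
    simp only [Matrix.submatrix_apply, Fin.succAbove_zero, Bm, Tm, Matrix.of_apply, Fin.val_succ]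
    split_ifs <;> first | rfl | (exact (‹False›).elim) | (exfalso; omega) | simp_all | omega
  have hlast : (Bm m).submatrix Fin.succ (Fin.succAbove ((Fin.last m).succ)) = Cm (m+1) := by
    ext i j
    have hi := i.isLt
    have hj := j.isLt
    have hv : (((Fin.last m).succ : Fin (m+2)) : ℕ) = m + 1 := by simp
    simp only [Matrix.submatrix_apply, Bm, Cm, Matrix.of_apply, Fin.val_succ, val_succAbove, hv]
    split_ifs <;> first | rfl | (exact (‹False›).elim) | (exfalso; omega) | simp_all | omega
  have e0 : Bm m 0 0 = 1 := by simp [Bm]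
  have elast : Bm m 0 (Fin.last m).succ = -1 := by
    have hv : (((Fin.last m).succ : Fin (m+2)) : ℕ) = m + 1 := by simp
    simp only [Bm, Matrix.of_apply, hv, Fin.val_zero]
    split_ifs <;> first | rfl | (exact (‹False›).elim) | (exfalso; omega) | simp_all | omega
  have hvlast : (((Fin.last m).succ : Fin (m+2)) : ℕ) = m + 1 := by simp
  have hv0 : ((0 : Fin (m+2)) : ℕ) = 0 := rfl
  rw [h00, hlast, e0, elast, detCm, hT, hvlast, hv0]
  have : (-1:ℝ) ^ (m+1) * (-1:ℝ) ^ (m+1) = 1 := by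
    rw [← pow_add]
    exact Even.neg_one_pow ⟨m+1, by ring⟩
  nlinarith [this]

def Dm (m : ℕ) : Matrix (Fin (m+2)) (Fin (m+2)) ℝ :=
  Matrix.of fun r j => if (r:ℕ) = 0 ∧ (j:ℕ) = m+1 then -1
    else if (j:ℕ) = r then 1 else if (r:ℕ) = (j:ℕ)+1 then 1
    else if (r:ℕ) = (j:ℕ)+2 then -1 else 0

lemma detDm (m : ℕ) (hT : (Tm (m+1)).det = (Nat.fib (m+2) : ℝ)) :
    (Dm m).det = 1 + (-1)^m * (Nat.fib (m+2) : ℝ) := by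
  rw [Matrix.det_succ_row_zero, Fin.sum_univ_succ, Fin.sum_univ_castSucc]
  have hmid : ∀ j : Fin m, Dm m 0 (j.castSucc.succ) = 0 := by
    intro j
    have hj := j.isLt
    simp only [Dm, Matrix.of_apply, Fin.val_succ, Fin.coe_castSucc, Fin.val_zero]
    split_ifs <;> first | rfl | (exact (‹False›).elim) | (exfalso; omega) | simp_all | omega
  have hz : ∀ j : Fin m, (-1:ℝ) ^ ((j.castSucc.succ : Fin (m+2)) : ℕ) *
      Dm m 0 j.castSucc.succ *
      ((Dm m).submatrix Fin.succ (Fin.succAbove j.castSucc.succ)).det = 0 := by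
    intro j; rw [hmid j]; ring
  rw [Finset.sum_eq_zero (fun j _ => hz j), zero_add]
  have h00 : (Dm m).submatrix Fin.succ (Fin.succAbove 0) = Lm (m+1) := by
    ext i j
    have hi := i.isLt
    have hj := j.isLt
    simp only [Matrix.submatrix_apply, Fin.succAbove_zero, Dm, Lm, Matrix.of_apply, Fin.val_succ]
    split_ifs <;> first | rfl | (exact (‹False›).elim) | (exfalso; omega) | simp_all | omega
  have hlast : (Dm m).submatrix Fin.succ (Fin.succAbove ((Fin.last m).succ)) = Tm (m+1) := by
    ext i j
    have hi := i.isLt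
    have hj := j.isLt
    have hv : (((Fin.last m).succ : Fin (m+2)) : ℕ) = m + 1 := by simp
    simp only [Matrix.submatrix_apply, Dm, Tm, Matrix.of_apply, Fin.val_succ, val_succAbove, hv]
    split_ifs <;> first | rfl | (exact (‹False›).elim) | (exfalso; omega) | simp_all | omega
  have e0 : Dm m 0 0 = 1 := by
    simp only [Dm, Matrix.of_apply, Fin.val_zero]
    split_ifs <;> first | rfl | (exact (‹False›).elim) | (exfalso; omega) | simp_all | omega
  have elast : Dm m 0 (Fin.last m).succ = -1 := by
    have hv : (((Fin.last m).succ : Fin (m+2)) : ℕ) = m + 1 := by simp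
    simp only [Dm, Matrix.of_apply, hv, Fin.val_zero]
    split_ifs <;> first | rfl | (exact (‹False›).elim) | (exfalso; omega) | simp_all | omega
  have hvlast : (((Fin.last m).succ : Fin (m+2)) : ℕ) = m + 1 := by simp
  have hv0 : ((0 : Fin (m+2)) : ℕ) = 0 := rfl
  rw [h00, hlast, e0, elast, detLm, hT, hvlast, hv0]
  have : (-1:ℝ) ^ (m+1) * (-1:ℝ) = (-1:ℝ)^m := by
    rw [← pow_succ, pow_succ, pow_succ]; ring
  nlinarith [this]

set_option maxHeartbeats 1600000 in
theorem det_wheel_twisted (n : ℕ) (hn : 3 ≤ n)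
    (f : ℕ → ℝ) (hf1 : f 1 = 1) (hf2 : f 2 = 1)
    (hf : ∀ k, 3 ≤ k → f k = f (k - 1) + f (k - 2)) :
    (Matrix.of (fun i j : Fin n =>
      if i = j then (if i.val = 0 then (2 : ℝ) else 1)
      else if j.val = i.val + 1 then 1
      else if i.val = j.val + 1 then -1
      else if i.val = 0 ∧ j.val = n - 1 then -1
      else if i.val = n - 1 ∧ j.val = 0 then 1
      else 0)).det = 2 * f (n + 1) - 1 + (-1) ^ (n + 1) := by
  obtain ⟨m, rfl⟩ : ∃ m, n = m + 3 := ⟨n - 3, by omega⟩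
  have hfib : ∀ k, 1 ≤ k → f k = (Nat.fib k : ℝ) := by
    intro k
    induction k using Nat.strong_induction_on with
    | _ k ih =>
      match k, ih with
      | 0, _ => intro h; exact absurd h (by omega)
      | 1, _ => intro _; simpa using hf1
      | 2, _ => intro _; simpa using hf2
      | (k+3), ih =>
        intro _
        rw [hf (k+3) (by omega)]
        have h1 : k+3-1 = k+2 := by omega
        have h2 : k+3-2 = k+1 := by omega
        rw [h1, h2, ih (k+2) (by omega) (by omega), ih (k+1) (by omega) (by omega)]
        have h3 : Nat.fib (k+3) = Nat.fib (k+1) + Nat.fib (k+2) := by rw [Nat.fib_add_two]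
        rw [h3]; push_cast; ring
  set M : Matrix (Fin (m+3)) (Fin (m+3)) ℝ := Matrix.of (fun i j : Fin (m+3) =>
      if i = j then (if i.val = 0 then (2 : ℝ) else 1)
      else if j.val = i.val + 1 then 1
      else if i.val = j.val + 1 then -1
      else if i.val = 0 ∧ j.val = m + 3 - 1 then -1
      else if i.val = m + 3 - 1 ∧ j.val = 0 then 1
      else 0) with hM
  rw [Matrix.det_succ_column_zero, Fin.sum_univ_succ, Fin.sum_univ_succ, Fin.sum_univ_castSucc]
  have e00 : M 0 0 = 2 := by
    rw [hM]
    simp only [Matrix.of_apply, Fin.ext_iff, Fin.val_zero]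
    split_ifs <;> first | rfl | (exact (‹False›).elim) | (exact (‹False ∧ _›).1.elim) | (exact (‹_ ∧ False›).2.elim) | (exfalso; omega) | (exfalso; simp_all <;> omega) | simp_all | omega
  have e10 : M (Fin.succ 0) 0 = -1 := by
    rw [hM]
    simp only [Matrix.of_apply, Fin.ext_iff, Fin.val_zero, Fin.val_succ]
    split_ifs <;> first | rfl | (exact (‹False›).elim) | (exact (‹False ∧ _›).1.elim) | (exact (‹_ ∧ False›).2.elim) | (exfalso; omega) | (exfalso; simp_all <;> omega) | simp_all | omega
  have emid : ∀ i : Fin m, M i.castSucc.succ.succ 0 = 0 := by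
    intro i
    have hi := i.isLt
    rw [hM]
    simp only [Matrix.of_apply, Fin.ext_iff, Fin.val_zero, Fin.val_succ, Fin.coe_castSucc]
    split_ifs <;> first | rfl | (exact (‹False›).elim) | (exact (‹False ∧ _›).1.elim) | (exact (‹_ ∧ False›).2.elim) | (exfalso; omega) | (exfalso; simp_all <;> omega) | simp_all | omega
  have elast : M (Fin.last m).succ.succ 0 = 1 := by
    rw [hM]
    simp only [Matrix.of_apply, Fin.ext_iff, Fin.val_zero, Fin.val_succ, Fin.val_last]
    split_ifs <;> first | rfl | (exact (‹False›).elim) | (exact (‹False ∧ _›).1.elim) | (exact (‹_ ∧ False›).2.elim) | (exfalso; omega) | (exfalso; simp_all <;> omega) | simp_all | omega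
  have h0 : M.submatrix (Fin.succAbove 0) Fin.succ = Tm (m+2) := by
    ext i j
    have hi := i.isLt
    have hj := j.isLt
    rw [hM]
    simp only [Matrix.submatrix_apply, Matrix.of_apply, Tm, Fin.ext_iff, val_succAbove,
      Fin.val_zero, Fin.val_succ]
    split_ifs <;> first | rfl | (exact (‹False›).elim) | (exact (‹False ∧ _›).1.elim) | (exact (‹_ ∧ False›).2.elim) | (exfalso; omega) | (exfalso; simp_all <;> omega) | simp_all | omega
  have h1 : M.submatrix (Fin.succ 0).succAbove Fin.succ = Bm m := by
    ext i j
    have hi := i.isLt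
    have hj := j.isLt
    rw [hM]
    simp only [Matrix.submatrix_apply, Matrix.of_apply, Bm, Fin.ext_iff, val_succAbove,
      Fin.val_zero, Fin.val_succ, zero_add, Nat.lt_one_iff]
    split_ifs <;> first | rfl | (exact (‹False›).elim) | (exact (‹False ∧ _›).1.elim) | (exact (‹_ ∧ False›).2.elim) | (exfalso; omega) | (exfalso; simp_all <;> omega) | simp_all | omega
  have hl : M.submatrix (Fin.last m).succ.succ.succAbove Fin.succ = Dm m := by
    ext i j
    have hi := i.isLt
    have hj := j.isLt
    rw [hM]
    simp only [Matrix.submatrix_apply, Matrix.of_apply, Dm, Fin.ext_iff, val_succAbove,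
      Fin.val_zero, Fin.val_succ, Fin.val_last]
    split_ifs <;> first | rfl | (exact (‹False›).elim) | (exact (‹False ∧ _›).1.elim) | (exact (‹_ ∧ False›).2.elim) | (exfalso; omega) | (exfalso; simp_all <;> omega) | simp_all | omega
  have hz : ∀ i : Fin m, (-1:ℝ) ^ ((i.castSucc.succ.succ : Fin (m+3)) : ℕ) *
      M i.castSucc.succ.succ 0 *
      (M.submatrix i.castSucc.succ.succ.succAbove Fin.succ).det = 0 := by
    intro i; rw [emid i]; ring
  rw [Finset.sum_eq_zero (fun i _ => hz i), zero_add, e00, e10, elast, h0, h1, hl,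
    detTm (m+2), detBm m (detTm (m+1)), detDm m (detTm (m+1)), hfib (m+3+1) (by omega)]
  have v0 : ((0 : Fin (m+3)) : ℕ) = 0 := rfl
  have v1 : ((Fin.succ 0 : Fin (m+3)) : ℕ) = 1 := rfl
  have vl : (((Fin.last m).succ.succ : Fin (m+3)) : ℕ) = m + 2 := by
    simp [Fin.val_succ, Fin.val_last]
  rw [v0, v1, vl]
  have h4 : (Nat.fib (m+3+1) : ℝ) = (Nat.fib (m+2) : ℝ) + (Nat.fib (m+3) : ℝ) := by
    rw [show m+3+1 = m+2+2 from rfl, Nat.fib_add_two]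
    push_cast; ring
  have hp2 : (-1:ℝ) ^ (m+2) = (-1:ℝ) ^ m := by rw [pow_add]; norm_num
  have hp4 : (-1:ℝ) ^ (m+3+1) = (-1:ℝ) ^ m := by
    rw [show m+3+1 = m+4 from rfl, pow_add]; norm_num
  have hsq : (-1:ℝ) ^ m * (-1:ℝ) ^ m = 1 := by
    rw [← pow_add]; exact Even.neg_one_pow ⟨m, by ring⟩
  rw [h4, hp2, hp4]
  push_cast
  nlinarith [hsq]
end

section
/- Define Fibonacci polynomials by f_1(x) = 1, f_2(x) = x, f_{n+1}(x) = x·f_n(x) + f_{n-1}(x), and Lucas polynomials by ℓ_{n-1}(x) = f_n(x) + f_{n-2}(x). For n ≥ 3, the characteristic polynomial det(t·I_n − A) of the skew-symmetric matrix A with A_{1,3} = 1, A_{2,3} = 1, A_{i,i+1} = 1 for 3 ≤ i ≤ n-1 (and A_{j,i} = −A_{i,j}, all other entries 0) equals t·ℓ_{n-1}(t). -/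
open Polynomial Matrix

noncomputable def pathM (m : ℕ) : Matrix (Fin m) (Fin m) (Polynomial ℝ) :=
  Matrix.of fun i j => if i.val = j.val then X else if j.val = i.val + 1 then -1
    else if i.val = j.val + 1 then 1 else 0

lemma pathM_sub (m : ℕ) : (pathM (m+1)).submatrix Fin.succ Fin.succ = pathM m := by
  ext i j : 2; simp [pathM]

lemma succAbove_one_val (m : ℕ) (j : Fin (m+1)) :
    (((1 : Fin (m+2)).succAbove j) : ℕ) = if j.val < 1 then j.val else j.val + 1 := by
  rcases j with ⟨jv, hj⟩
  simp [Fin.succAbove, Fin.lt_def]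
  split_ifs <;> simp_all

lemma minor1 (m : ℕ) :
    ((pathM (m+2)).submatrix Fin.succ ((1 : Fin (m+2)).succAbove)).submatrix
      ((0 : Fin (m+1)).succAbove) Fin.succ = pathM m := by
  ext i j : 2
  simp only [Matrix.submatrix_apply, Fin.succAbove_zero, pathM, Matrix.of_apply,
    Fin.val_succ, succAbove_one_val]
  split_ifs <;> first | rfl | omega

lemma det_path_rec (m : ℕ) :
    (pathM (m+2)).det = X * (pathM (m+1)).det + (pathM m).det := by
  rw [Matrix.det_succ_row_zero, Fin.sum_univ_succ, Fin.sum_univ_succ]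
  have h0 : pathM (m+2) 0 0 = X := by simp [pathM]
  have h1 : pathM (m+2) 0 (Fin.succ 0) = -1 := by simp [pathM]
  have hz : ∑ j : Fin m, (-1:Polynomial ℝ)^((j.succ.succ : Fin (m+2)):ℕ) *
      pathM (m+2) 0 j.succ.succ *
      ((pathM (m+2)).submatrix Fin.succ (j.succ.succ).succAbove).det = 0 := by
    apply Finset.sum_eq_zero; intro j _
    have : pathM (m+2) 0 j.succ.succ = 0 := by simp [pathM]
    rw [this]; ring
  rw [hz, h0, h1]
  have hminor0 : ((pathM (m+2)).submatrix Fin.succ ((0 : Fin (m+2)).succAbove)).det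
      = (pathM (m+1)).det := by rw [Fin.succAbove_zero, pathM_sub]
  have hminor1 : ((pathM (m+2)).submatrix Fin.succ ((Fin.succ 0 : Fin (m+2)).succAbove)).det
      = (pathM m).det := by
    have h10 : (Fin.succ 0 : Fin (m+2)) = 1 := rfl
    rw [h10, Matrix.det_succ_column_zero, Fin.sum_univ_succ]
    have e0 : (pathM (m+2)).submatrix Fin.succ (1 : Fin (m+2)).succAbove 0 0 = 1 := by
      simp only [Matrix.submatrix_apply, pathM, Matrix.of_apply, Fin.val_succ,
        succAbove_one_val]
      norm_num
    have hz2 : ∑ i : Fin m, (-1:Polynomial ℝ)^((i.succ : Fin (m+1)):ℕ) *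
        (pathM (m+2)).submatrix Fin.succ (1 : Fin (m+2)).succAbove i.succ 0 *
        (((pathM (m+2)).submatrix Fin.succ (1 : Fin (m+2)).succAbove).submatrix
          i.succ.succAbove Fin.succ).det = 0 := by
      apply Finset.sum_eq_zero; intro i _
      have : (pathM (m+2)).submatrix Fin.succ (1 : Fin (m+2)).succAbove i.succ 0 = 0 := by
        simp only [Matrix.submatrix_apply, pathM, Matrix.of_apply, Fin.val_succ,
          succAbove_one_val]
        norm_num
      rw [this]; ring
    rw [hz2, e0, minor1]
    simp
  rw [hminor0, hminor1]
  simp [Fin.val_succ]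

noncomputable def Cat (n : ℕ) : Matrix (Fin n) (Fin n) (Polynomial ℝ) :=
  Matrix.of fun i j => if i.val = j.val then X
    else if (i.val = 0 ∧ j.val = 2) ∨ (i.val = 1 ∧ j.val = 2) ∨
        (2 ≤ i.val ∧ j.val = i.val + 1) then -1
    else if (j.val = 0 ∧ i.val = 2) ∨ (j.val = 1 ∧ i.val = 2) ∨
        (2 ≤ j.val ∧ i.val = j.val + 1) then 1
    else 0

lemma succAbove_two_val (m : ℕ) (j : Fin (m+2)) :
    (((2 : Fin (m+3)).succAbove j) : ℕ) = if j.val < 2 then j.val else j.val + 1 := by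
  rcases j with ⟨jv, hj⟩
  simp [Fin.succAbove, Fin.lt_def, Nat.mod_eq_of_lt (show 2 < m + 3 by omega), Nat.mod_eq_of_lt (show 2 < m + 2 + 1 by omega)]
  split_ifs <;> simp_all

-- minor of Cat removing row 0 col 0 is the path matrix
lemma cat_minor0 (m : ℕ) :
    (Cat (m+3)).submatrix Fin.succ ((0 : Fin (m+3)).succAbove) = pathM (m+2) := by
  ext i j : 2
  rcases i with ⟨iv, hi⟩; rcases j with ⟨jv, hj⟩
  simp only [Matrix.submatrix_apply, Fin.succAbove_zero, Cat, pathM, Matrix.of_apply,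
    Fin.val_succ]
  split_ifs <;> first | rfl | omega |
    (simp only [false_and, false_or, true_and, and_true] at * ; omega)

-- the (row 0, col 2) minor, after removing its (row 1, col 0) entry, equals Q;
-- Q's lower-right block is pathM (m+1)... define the double minor directly
lemma cat_minor2 (m : ℕ) :
    (((Cat (m+3)).submatrix Fin.succ ((2 : Fin (m+3)).succAbove)).submatrix
      ((Fin.succ 0 : Fin (m+2)).succAbove) Fin.succ).submatrix Fin.succ Fin.succ
      = pathM m := by
  ext i j : 2
  rcases i with ⟨iv, hi⟩; rcases j with ⟨jv, hj⟩
  simp only [Matrix.submatrix_apply, Cat, pathM, Matrix.of_apply, Fin.val_succ,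
    Fin.succ_zero_eq_one, succAbove_two_val, succAbove_one_val]
  split_ifs <;> first | rfl | omega |
    (simp only [false_and, false_or, true_and, and_true] at * ; omega)

lemma det_cat (m : ℕ) :
    (Cat (m+3)).det = X * (pathM (m+2)).det + X * (pathM m).det := by
  rw [Matrix.det_succ_row_zero, Fin.sum_univ_succ, Fin.sum_univ_succ, Fin.sum_univ_succ]
  have h0 : Cat (m+3) 0 0 = X := by simp [Cat]
  have h1 : Cat (m+3) 0 (Fin.succ 0) = 0 := by simp [Cat]
  have h2 : Cat (m+3) 0 (Fin.succ (Fin.succ 0)) = -1 := by simp [Cat, Nat.mod_eq_of_lt (show 2 < m + 3 by omega), Nat.mod_eq_of_lt (show 2 < m + 2 + 1 by omega)]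
  have hz : ∑ j : Fin m, (-1:Polynomial ℝ)^((j.succ.succ.succ : Fin (m+3)):ℕ) *
      Cat (m+3) 0 j.succ.succ.succ *
      ((Cat (m+3)).submatrix Fin.succ (j.succ.succ.succ).succAbove).det = 0 := by
    apply Finset.sum_eq_zero; intro j _
    have : Cat (m+3) 0 j.succ.succ.succ = 0 := by simp [Cat]
    rw [this]; ring
  rw [hz, h0, h1, h2]
  have e22 : (Fin.succ (Fin.succ 0) : Fin (m+3)) = 2 := rfl
  rw [e22]
  have hm0 : ((Cat (m+3)).submatrix Fin.succ ((0 : Fin (m+3)).succAbove)).det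
      = (pathM (m+2)).det := by rw [cat_minor0]
  have hm2 : ((Cat (m+3)).submatrix Fin.succ ((2 : Fin (m+3)).succAbove)).det
      = -(X * (pathM m).det) := by
    set N := (Cat (m+3)).submatrix Fin.succ ((2 : Fin (m+3)).succAbove) with hN
    rw [Matrix.det_succ_column_zero, Fin.sum_univ_succ, Fin.sum_univ_succ]
    have n0 : N 0 0 = 0 := by
      simp [hN, Cat, succAbove_two_val]
    have n1 : N (Fin.succ 0) 0 = 1 := by
      simp [hN, Cat, succAbove_two_val, show (2 : Fin (m+3)).succAbove (0 : Fin (m+2)) = 0 from Fin.ext (by rw [succAbove_two_val]; simp), Nat.mod_eq_of_lt (show 2 < m + 3 by omega), Nat.mod_eq_of_lt (show 2 < m + 2 + 1 by omega)]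
    have nz : ∑ i : Fin m, (-1:Polynomial ℝ)^((i.succ.succ : Fin (m+2)):ℕ) *
        N i.succ.succ 0 * ((N.submatrix (i.succ.succ).succAbove Fin.succ)).det = 0 := by
      apply Finset.sum_eq_zero; intro i _
      have : N i.succ.succ 0 = 0 := by simp [hN, Cat, succAbove_two_val]
      rw [this]; ring
    rw [nz, n0, n1]
    set Q := N.submatrix ((Fin.succ 0 : Fin (m+2)).succAbove) Fin.succ with hQ
    have hdetQ : Q.det = X * (pathM m).det := by
      rw [Matrix.det_succ_row_zero, Fin.sum_univ_succ]
      have q0 : Q 0 0 = X := by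
        simp [hQ, hN, Cat, succAbove_two_val, succAbove_one_val]
      have qz : ∑ j : Fin m, (-1:Polynomial ℝ)^((j.succ : Fin (m+1)):ℕ) *
          Q 0 j.succ * ((Q.submatrix Fin.succ (j.succ).succAbove)).det = 0 := by
        apply Finset.sum_eq_zero; intro j _
        have : Q 0 j.succ = 0 := by
          simp only [hQ, hN, Matrix.submatrix_apply, Cat, Matrix.of_apply, Fin.val_succ,
            Fin.succ_zero_eq_one, succAbove_two_val, succAbove_one_val, Fin.val_zero]
          split_ifs <;> first | rfl | omega |
            (simp only [false_and, false_or, true_and, and_true] at * ; omega)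
        rw [this]; ring
      have qsub : (Q.submatrix Fin.succ ((0 : Fin (m+1)).succAbove)).det = (pathM m).det := by
        rw [Fin.succAbove_zero, hQ, hN]
        rw [Matrix.submatrix_submatrix, Matrix.submatrix_submatrix]
        rw [← Matrix.submatrix_submatrix, ← Matrix.submatrix_submatrix, cat_minor2]
      rw [qz, qsub, q0]
      simp
    rw [hdetQ]
    simp
  rw [hm0, hm2]
  simp [Nat.mod_eq_of_lt (show 2 < m + 3 by omega), Nat.mod_eq_of_lt (show 2 < m + 2 + 1 by omega)]




theorem charpoly_caterpillar (n : ℕ) (hn : 3 ≤ n)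
    (f l : ℕ → Polynomial ℝ)
    (hf1 : f 1 = 1) (hf2 : f 2 = Polynomial.X)
    (hf : ∀ k, 2 ≤ k → f (k + 1) = Polynomial.X * f k + f (k - 1))
    (hl : ∀ k, 3 ≤ k → l (k - 1) = f k + f (k - 2)) :
    (Matrix.of (fun i j : Fin n =>
      if (i.val = 0 ∧ j.val = 2) ∨ (i.val = 1 ∧ j.val = 2) ∨
         (2 ≤ i.val ∧ j.val = i.val + 1) then (1 : ℝ)
      else if (j.val = 0 ∧ i.val = 2) ∨ (j.val = 1 ∧ i.val = 2) ∨
              (2 ≤ j.val ∧ i.val = j.val + 1) then -1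
      else 0) : Matrix (Fin n) (Fin n) ℝ).charpoly
      = Polynomial.X * l (n - 1) := by
  obtain ⟨m, rfl⟩ : ∃ m, n = m + 3 := ⟨n - 3, by omega⟩
  set M : Matrix (Fin (m+3)) (Fin (m+3)) ℝ := Matrix.of (fun i j : Fin (m+3) =>
      if (i.val = 0 ∧ j.val = 2) ∨ (i.val = 1 ∧ j.val = 2) ∨
         (2 ≤ i.val ∧ j.val = i.val + 1) then (1 : ℝ)
      else if (j.val = 0 ∧ i.val = 2) ∨ (j.val = 1 ∧ i.val = 2) ∨
              (2 ≤ j.val ∧ i.val = j.val + 1) then -1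
      else 0) with hM
  have hchar : M.charmatrix = Cat (m+3) := by
    ext i j : 2
    by_cases h : i = j
    · subst h
      rw [Matrix.charmatrix_apply_eq]
      have : M i i = 0 := by
        rcases i with ⟨iv, hi⟩
        simp only [hM, Matrix.of_apply]
        split_ifs <;> first | rfl | omega
      rw [this]
      rcases i with ⟨iv, hi⟩
      simp [Cat]
    · rw [Matrix.charmatrix_apply_ne _ _ _ h]
      have hij : i.val ≠ j.val := fun hh => h (Fin.ext hh)
      rcases i with ⟨iv, hi⟩; rcases j with ⟨jv, hj⟩
      simp only [hM, Matrix.of_apply, Cat]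
      split_ifs <;> first | simp | omega
  have hP : ∀ s, (pathM s).det = f (s+1) := by
    intro s
    induction s using Nat.twoStepInduction with
    | zero => rw [Matrix.det_fin_zero, hf1]
    | one =>
      rw [Matrix.det_fin_one]
      rw [hf2]; rfl
    | more s ih1 ih2 =>
      rw [det_path_rec, ih1, ih2, hf (s+2) (by omega)]
      norm_num
  have : M.charpoly = (M.charmatrix).det := rfl
  rw [this, hchar, det_cat, hP, hP, hl (m+3) (by omega)]
  have e1 : m + 3 - 2 = m + 1 := by omega
  rw [e1]
  ring
end

section
/- For n ≥ 2, let A be the n×n matrix with A_{1,1} = 1, A_{i,i+1} = 1, A_{i+1,i} = −1 for 1 ≤ i ≤ n−1, and all other entries 0. Then det(t·I_n − A) = f_{n+1}(t) − f_n(t), where f_k(x) are the Fibonacci polynomials with f_1(x) = 1, f_2(x) = x, f_{n+1}(x) = x f_n(x) + f_{n-1}(x). -/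
open Polynomial Matrix

/-- Tridiagonal matrix with corner `c`, diagonal `X` elsewhere,
superdiagonal `-1`, subdiagonal `1`. -/
noncomputable def Tmat (c : Polynomial ℝ) (n : ℕ) : Matrix (Fin n) (Fin n) (Polynomial ℝ) :=
  Matrix.of fun i j =>
    if i = j then (if i.val = 0 then c else Polynomial.X)
    else if j.val = i.val + 1 then -1
    else if i.val = j.val + 1 then 1
    else 0

/-- Pure tridiagonal (all diagonal `X`). -/
noncomputable def Qmat (n : ℕ) : Matrix (Fin n) (Fin n) (Polynomial ℝ) := Tmat Polynomial.X n

lemma Qmat_apply (n : ℕ) (i j : Fin n) :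
    Qmat n i j = if i = j then Polynomial.X
      else if j.val = i.val + 1 then -1
      else if i.val = j.val + 1 then 1 else 0 := by
  simp only [Qmat, Tmat, Matrix.of_apply]
  split_ifs <;> rfl

lemma key (c : Polynomial ℝ) (n : ℕ) :
    (Tmat c (n + 2)).det = c * (Qmat (n + 1)).det + (Qmat n).det := by
  rw [Matrix.det_succ_row_zero, Fin.sum_univ_succ, Fin.sum_univ_succ]
  have h0 : (Tmat c (n + 2)) 0 0 = c := by simp [Tmat]
  have h1 : (Tmat c (n + 2)) 0 (Fin.succ 0) = -1 := by
    simp only [Tmat, Matrix.of_apply, Fin.ext_iff, Fin.val_succ, Fin.val_zero]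
    norm_num
  have hrest : ∀ j : Fin n, (Tmat c (n + 2)) 0 (Fin.succ (Fin.succ j)) = 0 := by
    intro j
    simp only [Tmat, Matrix.of_apply, Fin.ext_iff, Fin.val_succ, Fin.val_zero]
    split_ifs <;> first | rfl | omega | exact absurd ‹False› not_false
  have hm0 : (Tmat c (n + 2)).submatrix Fin.succ (Fin.succAbove 0) = Qmat (n + 1) := by
    ext i j
    simp only [Matrix.submatrix_apply, Fin.succAbove_zero, Tmat, Matrix.of_apply,
      Qmat_apply, Fin.ext_iff, Fin.val_succ]
    split_ifs <;> first | rfl | omega | exact absurd ‹False› not_false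
  have hm1 : ((Tmat c (n + 2)).submatrix Fin.succ ((Fin.succ 0 : Fin (n+2)).succAbove)).det
      = (Qmat n).det := by
    have hsa0 : ((Fin.succ 0 : Fin (n+2)).succAbove 0).val = 0 := by
      simp [Fin.succAbove, Fin.lt_def]
    have hsa : ∀ j : Fin n, ((Fin.succ 0 : Fin (n+2)).succAbove (Fin.succ j)).val = j.val + 2 := by
      intro j
      simp [Fin.succAbove, Fin.lt_def]
    rw [Matrix.det_succ_column_zero, Fin.sum_univ_succ]
    have e0 : ((Tmat c (n + 2)).submatrix Fin.succ ((Fin.succ 0 : Fin (n+2)).succAbove)) 0 0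
        = 1 := by
      simp only [Matrix.submatrix_apply, Tmat, Matrix.of_apply, Fin.ext_iff, Fin.val_succ, hsa0]
      norm_num
    have erest : ∀ i : Fin n,
        ((Tmat c (n + 2)).submatrix Fin.succ ((Fin.succ 0 : Fin (n+2)).succAbove))
          (Fin.succ i) 0 = 0 := by
      intro i
      simp only [Matrix.submatrix_apply, Tmat, Matrix.of_apply, Fin.ext_iff, Fin.val_succ, hsa0]
      split_ifs <;> first | rfl | omega | exact absurd ‹False› not_false
    have em : (((Tmat c (n + 2)).submatrix Fin.succ ((Fin.succ 0 : Fin (n+2)).succAbove)).submatrix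
        (Fin.succAbove 0) Fin.succ) = Qmat n := by
      ext i j
      simp only [Matrix.submatrix_apply, Fin.succAbove_zero, Tmat, Matrix.of_apply,
        Qmat_apply, Fin.ext_iff, Fin.val_succ, hsa]
      split_ifs <;> first | rfl | omega | exact absurd ‹False› not_false
    rw [e0, em]
    simp only [erest, mul_zero, zero_mul, Finset.sum_const_zero, add_zero,
      Fin.val_zero, pow_zero, one_mul, mul_one]
  rw [h0, h1, hm0, hm1]
  simp only [hrest, mul_zero, zero_mul, Finset.sum_const_zero, add_zero,
    Fin.val_zero, Fin.val_succ, pow_zero, pow_one, one_mul]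
  ring

lemma Qdet (f : ℕ → Polynomial ℝ)
    (hf1 : f 1 = 1) (hf2 : f 2 = Polynomial.X)
    (hf : ∀ k, 2 ≤ k → f (k + 1) = Polynomial.X * f k + f (k - 1)) :
    ∀ n, (Qmat n).det = f (n + 1) := by
  have base0 : (Qmat 0).det = f 1 := by
    rw [hf1]; exact Matrix.det_fin_zero
  have base1 : (Qmat 1).det = f 2 := by
    rw [hf2, Matrix.det_fin_one, Qmat_apply]; simp
  intro n
  induction n using Nat.strong_induction_on with
  | _ n ih =>
    match n with
    | 0 => exact base0
    | 1 => exact base1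
    | (m + 2) =>
      rw [show Qmat (m+2) = Tmat Polynomial.X (m+2) from rfl, key,
        ih (m+1) (by omega), ih m (by omega), hf (m+2) (by omega)]
      rfl

theorem charpoly_path_bouquet_twisted (n : ℕ) (hn : 2 ≤ n)
    (f : ℕ → Polynomial ℝ)
    (hf1 : f 1 = 1) (hf2 : f 2 = Polynomial.X)
    (hf : ∀ k, 2 ≤ k → f (k + 1) = Polynomial.X * f k + f (k - 1)) :
    (Matrix.of (fun i j : Fin n =>
      if i = j then (if i.val = 0 then (1 : ℝ) else 0)
      else if j.val = i.val + 1 then 1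
      else if i.val = j.val + 1 then -1
      else 0) : Matrix (Fin n) (Fin n) ℝ).charpoly = f (n + 1) - f n := by
  obtain ⟨m, rfl⟩ : ∃ m, n = m + 2 := ⟨n - 2, by omega⟩
  have hchar : Matrix.charmatrix (Matrix.of (fun i j : Fin (m+2) =>
      if i = j then (if i.val = 0 then (1 : ℝ) else 0)
      else if j.val = i.val + 1 then 1
      else if i.val = j.val + 1 then -1
      else 0)) = Tmat (Polynomial.X - 1) (m + 2) := by
    ext i j
    by_cases h : i = j
    · subst h
      rw [Matrix.charmatrix_apply_eq]
      simp only [Tmat, Matrix.of_apply, if_pos rfl]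
      split_ifs <;> simp
    · rw [Matrix.charmatrix_apply_ne _ _ _ h]
      simp only [Tmat, Matrix.of_apply, if_neg h]
      split_ifs <;> simp
  have h21 : m + 2 - 1 = m + 1 := rfl
  rw [Matrix.charpoly, hchar, key, Qdet f hf1 hf2 hf, Qdet f hf1 hf2 hf,
    hf (m + 2) (by omega), h21]
  ring
end

section
/- For n ≥ 3, let A be the n×n matrix with A_{1,1} = 1, A_{i,i+1} = 1 and A_{i+1,i} = −1 for 1 ≤ i ≤ n−1, A_{1,n} = −1, A_{n,1} = 1, and all other entries 0. Then det(t·I_n − A) = (t−1)·f_n(t) + 2·f_{n-1}(t) + (−1)^{n+1} − 1, where f_k are the Fibonacci polynomials. -/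
set_option maxHeartbeats 1000000

open Polynomial Matrix

namespace WheelCharpoly

noncomputable abbrev Rp := Polynomial ℝ

noncomputable def Fp : ℕ → Rp
  | 0 => 1
  | 1 => Polynomial.X
  | (k+2) => Polynomial.X * Fp (k+1) + Fp k

noncomputable def Tm (m : ℕ) : Matrix (Fin m) (Fin m) Rp :=
  Matrix.of fun i j =>
    if (i : ℕ) = j then Polynomial.X
    else if (j : ℕ) = (i : ℕ) + 1 then -1
    else if (i : ℕ) = (j : ℕ) + 1 then 1
    else 0

lemma succAbove_val {n : ℕ} (p : Fin (n+1)) (i : Fin n) :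
    ((p.succAbove i : Fin (n+1)) : ℕ) = if (i : ℕ) < (p : ℕ) then (i : ℕ) else (i : ℕ) + 1 := by
  rw [Fin.succAbove]
  split_ifs with h1 h2 h3
  · rfl
  · exact absurd h1 (by simpa [Fin.lt_def] using h2)
  · exact absurd (by simpa [Fin.lt_def] using h3) h1
  · rfl

lemma vz {n : ℕ} : ((0 : Fin (n+1)) : ℕ) = 0 := by rw [Fin.val_zero]
lemma vs {n : ℕ} (i : Fin n) : ((i.succ : Fin (n+1)) : ℕ) = i + 1 := by rw [Fin.val_succ]
lemma vl {n : ℕ} : ((Fin.last n : Fin (n+1)) : ℕ) = n := by rw [Fin.val_last]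
lemma vc {n : ℕ} (i : Fin n) : ((i.castSucc : Fin (n+1)) : ℕ) = i := by rw [Fin.coe_castSucc]

lemma tm_minor0 (k : ℕ) :
    (Tm (k+2)).submatrix Fin.succ ((0 : Fin (k+2)).succAbove) = Tm (k+1) := by
  ext i j : 1
  have hi := i.isLt; have hj := j.isLt
  simp only [Matrix.submatrix_apply, Tm, Matrix.of_apply, vs, succAbove_val,
    vz]
  split_ifs <;> first | (exfalso; omega) | rfl | exact (‹False›).elim

lemma tm_minor1_det (k : ℕ) (ih : (Tm k).det = Fp k) :
    ((Tm (k+2)).submatrix Fin.succ ((0 : Fin (k+1)).succ.succAbove)).det = Fp k := by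
  rw [show ((Tm (k+2)).submatrix Fin.succ ((0 : Fin (k+1)).succ.succAbove)).det = _ from
    Matrix.det_succ_column_zero _]
  rw [Fin.sum_univ_succ]
  have hz2 : ∀ i : Fin k,
      ((-1 : Rp)) ^ ((i.succ : Fin (k+1)) : ℕ) *
        ((Tm (k+2)).submatrix Fin.succ ((0 : Fin (k+1)).succ.succAbove)) i.succ 0 *
        (((Tm (k+2)).submatrix Fin.succ
          ((0 : Fin (k+1)).succ.succAbove)).submatrix i.succ.succAbove Fin.succ).det = 0 := by
    intro i
    have : ((Tm (k+2)).submatrix Fin.succ ((0 : Fin (k+1)).succ.succAbove)) i.succ 0 = 0 := by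
      have hi := i.isLt
      simp only [Matrix.submatrix_apply, Tm, Matrix.of_apply, vs, succAbove_val,
        vz]
      split_ifs <;> first | (exfalso; omega) | rfl | exact (‹False›).elim
    rw [this, mul_zero, zero_mul]
  rw [Finset.sum_eq_zero (fun i _ => hz2 i)]
  have e1 : ((Tm (k+2)).submatrix Fin.succ ((0 : Fin (k+1)).succ.succAbove)) 0 0 = 1 := by
    simp only [Matrix.submatrix_apply, Tm, Matrix.of_apply, Fin.val_succ, succAbove_val,
      Fin.val_zero]
    norm_num
  have e2 : (((Tm (k+2)).submatrix Fin.succ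
      ((0 : Fin (k+1)).succ.succAbove)).submatrix (0 : Fin (k+1)).succAbove Fin.succ)
      = Tm k := by
    ext i j : 1
    have hi := i.isLt; have hj := j.isLt
    simp only [Matrix.submatrix_apply, Tm, Matrix.of_apply, vs, succAbove_val,
      vz]
    split_ifs <;> first | (exfalso; omega) | rfl | exact (‹False›).elim
  rw [e1, e2, ih]
  simp

lemma tm_det : ∀ m, (Tm m).det = Fp m := by
  intro m
  induction m using Nat.strong_induction_on with
  | _ m ih =>
    match m with
    | 0 => simp [Tm, Fp, Matrix.det_fin_zero]
    | 1 => simp [Tm, Fp, Matrix.det_fin_one]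
    | (k+2) =>
      rw [show (Tm (k+2)).det = _ from Matrix.det_succ_row_zero _]
      rw [Fin.sum_univ_succ, Fin.sum_univ_succ]
      have hz : ∀ j : Fin k,
          ((-1 : Rp)) ^ ((j.succ.succ : Fin (k+2)) : ℕ) * Tm (k+2) 0 j.succ.succ *
            ((Tm (k+2)).submatrix Fin.succ (Fin.succAbove j.succ.succ)).det = 0 := by
        intro j
        have : Tm (k+2) 0 (j.succ.succ) = 0 := by
          have hj := j.isLt
          simp only [Tm, Matrix.of_apply, Fin.val_succ, Fin.val_zero]
          split_ifs <;> first | (exfalso; omega) | rfl | exact (‹False›).elim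
        rw [this, mul_zero, zero_mul]
      rw [Finset.sum_eq_zero (fun j _ => hz j)]
      have h1 : Tm (k+2) 0 ((0 : Fin (k+1)).succ) = -1 := by
        simp [Tm]
      have h00 : Tm (k+2) 0 0 = Polynomial.X := by simp [Tm]
      rw [tm_minor0 k, tm_minor1_det k (ih k (by omega)), h1, h00, ih (k+1) (by omega)]
      show _ = Fp (k+2)
      simp [Fp]

noncomputable def W (n : ℕ) : Matrix (Fin n) (Fin n) Rp :=
  Matrix.of fun i j =>
    if i = j then (if (i : ℕ) = 0 then Polynomial.X - 1 else Polynomial.X)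
    else if (j : ℕ) = (i : ℕ) + 1 then -1
    else if (i : ℕ) = (j : ℕ) + 1 then 1
    else if (i : ℕ) = 0 ∧ (j : ℕ) = n - 1 then 1
    else if (i : ℕ) = n - 1 ∧ (j : ℕ) = 0 then -1
    else 0

lemma w_minor0 (k : ℕ) :
    (W (k+3)).submatrix Fin.succ ((0 : Fin (k+3)).succAbove) = Tm (k+2) := by
  ext i j : 1
  have hi := i.isLt; have hj := j.isLt
  simp only [Matrix.submatrix_apply, W, Tm, Matrix.of_apply, vs, succAbove_val,
    vz, Fin.ext_iff, true_and, and_true, false_and, and_false]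
  split_ifs <;> first | (exfalso; omega) | rfl | exact (‹False›).elim |
    exact (‹False ∧ _›).1.elim | exact (‹_ ∧ False›).2.elim

lemma w_minor1_det (k : ℕ) (htm : (Tm (k+1)).det = Fp (k+1)) :
    ((W (k+3)).submatrix Fin.succ ((0 : Fin (k+2)).succ.succAbove)).det
      = Fp (k+1) - 1 := by
  set Q := (W (k+3)).submatrix Fin.succ ((0 : Fin (k+2)).succ.succAbove) with hQ
  rw [show Q.det = _ from Matrix.det_succ_column_zero _]
  rw [Fin.sum_univ_succ, Fin.sum_univ_castSucc]
  have hz : ∀ r : Fin k,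
      ((-1 : Rp)) ^ (((r.castSucc.succ : Fin (k+2))) : ℕ) * Q r.castSucc.succ 0 *
        (Q.submatrix (r.castSucc.succ).succAbove Fin.succ).det = 0 := by
    intro r
    have : Q r.castSucc.succ 0 = 0 := by
      have hr := r.isLt
      simp only [hQ, Matrix.submatrix_apply, W, Matrix.of_apply, vs, succAbove_val,
        vz, vc, Fin.ext_iff, true_and, and_true, false_and, and_false]
      split_ifs <;> first | (exfalso; omega) | rfl | exact (‹False›).elim |
        exact (‹False ∧ _›).1.elim | exact (‹_ ∧ False›).2.elim
    rw [this, mul_zero, zero_mul]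
  rw [Finset.sum_eq_zero (fun r _ => hz r)]
  have e1 : Q 0 0 = 1 := by
    simp only [hQ, Matrix.submatrix_apply, W, Matrix.of_apply, Fin.val_succ, succAbove_val,
      Fin.val_zero, Fin.ext_iff, true_and, and_true, false_and, and_false]
    norm_num
  have e2 : Q.submatrix ((0 : Fin (k+2)).succAbove) Fin.succ = Tm (k+1) := by
    ext i j : 1
    have hi := i.isLt; have hj := j.isLt
    simp only [hQ, Matrix.submatrix_apply, W, Tm, Matrix.of_apply, vs, succAbove_val,
      vz, Fin.ext_iff, true_and, and_true, false_and, and_false]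
    split_ifs <;> first | (exfalso; omega) | rfl | exact (‹False›).elim |
      exact (‹False ∧ _›).1.elim | exact (‹_ ∧ False›).2.elim
  have e3 : Q (Fin.last k).succ 0 = -1 := by
    simp only [hQ, Matrix.submatrix_apply, W, Matrix.of_apply, vs, succAbove_val,
      vz, vl, Fin.ext_iff, true_and, and_true, false_and, and_false]
    split_ifs <;> first | (exfalso; omega) | rfl | exact (‹False›).elim |
      exact (‹False ∧ _›).1.elim | exact (‹_ ∧ False›).2.elim
  have e4 : (Q.submatrix ((Fin.last k).succ.succAbove) Fin.succ).det = (-1) ^ (k+1) := by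
    have ht : (Q.submatrix ((Fin.last k).succ.succAbove) Fin.succ).BlockTriangular
        OrderDual.toDual := by
      intro i j hij
      have hij' : (i : ℕ) < (j : ℕ) := hij
      have hi := i.isLt; have hj := j.isLt
      simp only [hQ, Matrix.submatrix_apply, W, Matrix.of_apply, vs, succAbove_val,
        vz, vl, Fin.ext_iff, true_and, and_true, false_and, and_false]
      split_ifs <;> first | (exfalso; omega) | rfl | exact (‹False›).elim |
        exact (‹False ∧ _›).1.elim | exact (‹_ ∧ False›).2.elim
    rw [Matrix.det_of_lowerTriangular _ ht]
    have hd : ∀ i : Fin (k+1),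
        (Q.submatrix ((Fin.last k).succ.succAbove) Fin.succ) i i = -1 := by
      intro i
      have hi := i.isLt
      simp only [hQ, Matrix.submatrix_apply, W, Matrix.of_apply, vs, succAbove_val,
        vz, vl, Fin.ext_iff, true_and, and_true, false_and, and_false]
      split_ifs <;> first | (exfalso; omega) | rfl | exact (‹False›).elim |
        exact (‹False ∧ _›).1.elim | exact (‹_ ∧ False›).2.elim
    rw [Finset.prod_congr rfl (fun i _ => hd i)]
    simp
  rw [e1, e2, e3, e4, htm]
  simp only [Fin.val_zero, Fin.val_succ, Fin.val_last, pow_zero]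
  have hsq : ((-1 : Rp)) ^ (k+1) * (-1) ^ (k+1) = 1 := by
    rw [← pow_add]
    exact Even.neg_one_pow ⟨k+1, by ring⟩
  have h5 : (-1 : Rp) ^ (k+1) * -1 * (-1) ^ (k+1) = -1 := by
    rw [mul_right_comm, hsq, one_mul]
  rw [h5]
  ring

lemma w_minorlast_det (k : ℕ) (htm : (Tm (k+1)).det = Fp (k+1)) :
    ((W (k+3)).submatrix Fin.succ (((Fin.last k).succ.succ : Fin (k+3)).succAbove)).det
      = 1 + (-1) ^ k * Fp (k+1) := by
  set Q := (W (k+3)).submatrix Fin.succ (((Fin.last k).succ.succ : Fin (k+3)).succAbove) with hQ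
  rw [show Q.det = _ from Matrix.det_succ_column_zero _]
  rw [Fin.sum_univ_succ, Fin.sum_univ_castSucc]
  have hz : ∀ r : Fin k,
      ((-1 : Rp)) ^ (((r.castSucc.succ : Fin (k+2))) : ℕ) * Q r.castSucc.succ 0 *
        (Q.submatrix (r.castSucc.succ).succAbove Fin.succ).det = 0 := by
    intro r
    have : Q r.castSucc.succ 0 = 0 := by
      have hr := r.isLt
      simp only [hQ, Matrix.submatrix_apply, W, Matrix.of_apply, vs, succAbove_val,
        vz, vl, vc, Fin.ext_iff, true_and, and_true, false_and, and_false]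
      split_ifs <;> first | (exfalso; omega) | rfl | exact (‹False›).elim |
        exact (‹False ∧ _›).1.elim | exact (‹_ ∧ False›).2.elim
    rw [this, mul_zero, zero_mul]
  rw [Finset.sum_eq_zero (fun r _ => hz r)]
  have e1 : Q 0 0 = 1 := by
    simp only [hQ, Matrix.submatrix_apply, W, Matrix.of_apply, vs, succAbove_val,
      vz, vl, Fin.ext_iff, true_and, and_true, false_and, and_false]
    split_ifs <;> first | (exfalso; omega) | rfl | exact (‹False›).elim |
      exact (‹False ∧ _›).1.elim | exact (‹_ ∧ False›).2.elim
  have e2 : (Q.submatrix ((0 : Fin (k+2)).succAbove) Fin.succ).det = 1 := by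
    have ht : (Q.submatrix ((0 : Fin (k+2)).succAbove) Fin.succ).BlockTriangular id := by
      intro i j hij
      have hij' : (j : ℕ) < (i : ℕ) := hij
      have hi := i.isLt; have hj := j.isLt
      simp only [hQ, Matrix.submatrix_apply, W, Matrix.of_apply, vs, succAbove_val,
        vz, vl, Fin.ext_iff, true_and, and_true, false_and, and_false]
      split_ifs <;> first | (exfalso; omega) | rfl | exact (‹False›).elim |
        exact (‹False ∧ _›).1.elim | exact (‹_ ∧ False›).2.elim
    rw [Matrix.det_of_upperTriangular ht]
    have hd : ∀ i : Fin (k+1),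
        (Q.submatrix ((0 : Fin (k+2)).succAbove) Fin.succ) i i = 1 := by
      intro i
      have hi := i.isLt
      simp only [hQ, Matrix.submatrix_apply, W, Matrix.of_apply, vs, succAbove_val,
        vz, vl, Fin.ext_iff, true_and, and_true, false_and, and_false]
      split_ifs <;> first | (exfalso; omega) | rfl | exact (‹False›).elim |
        exact (‹False ∧ _›).1.elim | exact (‹_ ∧ False›).2.elim
    rw [Finset.prod_congr rfl (fun i _ => hd i)]
    simp
  have e3 : Q (Fin.last k).succ 0 = -1 := by
    simp only [hQ, Matrix.submatrix_apply, W, Matrix.of_apply, vs, succAbove_val,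
      vz, vl, Fin.ext_iff, true_and, and_true, false_and, and_false]
    split_ifs <;> first | (exfalso; omega) | rfl | exact (‹False›).elim |
      exact (‹False ∧ _›).1.elim | exact (‹_ ∧ False›).2.elim
  have e4 : Q.submatrix ((Fin.last k).succ.succAbove) Fin.succ = Tm (k+1) := by
    ext i j : 1
    have hi := i.isLt; have hj := j.isLt
    simp only [hQ, Matrix.submatrix_apply, W, Tm, Matrix.of_apply, vs, succAbove_val,
      vz, vl, Fin.ext_iff, true_and, and_true, false_and, and_false]
    split_ifs <;> first | (exfalso; omega) | rfl | exact (‹False›).elim |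
      exact (‹False ∧ _›).1.elim | exact (‹_ ∧ False›).2.elim
  rw [e1, e2, e3, e4, htm]
  simp only [Fin.val_zero, Fin.val_succ, Fin.val_last, pow_zero]
  have h5 : (-1 : Rp) ^ (k+1) * -1 = (-1) ^ k := by
    rw [pow_succ]
    ring
  rw [h5]
  ring

lemma w_det (k : ℕ) :
    (W (k+3)).det = (Polynomial.X - 1) * Fp (k+2) + 2 * Fp (k+1) + (-1) ^ k - 1 := by
  rw [show (W (k+3)).det = _ from Matrix.det_succ_row_zero _]
  rw [Fin.sum_univ_succ, Fin.sum_univ_succ, Fin.sum_univ_castSucc]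
  have hz : ∀ jj : Fin k,
      ((-1 : Rp)) ^ (((jj.castSucc.succ.succ : Fin (k+3))) : ℕ) * W (k+3) 0 jj.castSucc.succ.succ *
        ((W (k+3)).submatrix Fin.succ (jj.castSucc.succ.succ).succAbove).det = 0 := by
    intro jj
    have : W (k+3) 0 jj.castSucc.succ.succ = 0 := by
      have hj := jj.isLt
      simp only [W, Matrix.of_apply, Fin.val_succ, Fin.val_zero, Fin.coe_castSucc, Fin.ext_iff, true_and, and_true, false_and, and_false]
      split_ifs <;> first | (exfalso; omega) | rfl | exact (‹False›).elim |
        exact (‹False ∧ _›).1.elim | exact (‹_ ∧ False›).2.elim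
    rw [this, mul_zero, zero_mul]
  rw [Finset.sum_eq_zero (fun jj _ => hz jj)]
  have a0 : W (k+3) 0 0 = Polynomial.X - 1 := by
    simp [W]
  have a1 : W (k+3) 0 ((0 : Fin (k+2)).succ) = -1 := by
    simp only [W, Matrix.of_apply, Fin.val_succ, Fin.val_zero, Fin.ext_iff, true_and, and_true, false_and, and_false]
    split_ifs <;> first | (exfalso; omega) | rfl | exact (‹False›).elim |
      exact (‹False ∧ _›).1.elim | exact (‹_ ∧ False›).2.elim
  have a2 : W (k+3) 0 ((Fin.last k).succ.succ) = 1 := by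
    simp only [W, Matrix.of_apply, Fin.val_succ, Fin.val_zero, Fin.val_last, Fin.ext_iff, true_and, and_true, false_and, and_false]
    split_ifs <;> first | (exfalso; omega) | rfl | exact (‹False›).elim |
      exact (‹False ∧ _›).1.elim | exact (‹_ ∧ False›).2.elim
  rw [a0, a1, a2, w_minor0 k, w_minor1_det k (tm_det (k+1)), w_minorlast_det k (tm_det (k+1)),
    tm_det (k+2)]
  simp only [Fin.val_zero, Fin.val_succ, Fin.val_last, pow_zero]
  have hkk : ((-1 : Rp)) ^ (k+1+1) = (-1) ^ k := by
    rw [show k+1+1 = k+2 from rfl, pow_add]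
    norm_num
  have hsq : ((-1 : Rp)) ^ k * (-1) ^ k = 1 := by
    rw [← pow_add]
    exact Even.neg_one_pow ⟨k, by ring⟩
  rw [hkk]
  linear_combination (Fp (k+1)) * hsq

lemma charm_eq (n : ℕ) :
    Matrix.charmatrix (Matrix.of (fun i j : Fin n =>
      if i = j then (if i.val = 0 then (1 : ℝ) else 0)
      else if j.val = i.val + 1 then 1
      else if i.val = j.val + 1 then -1
      else if i.val = 0 ∧ j.val = n - 1 then -1
      else if i.val = n - 1 ∧ j.val = 0 then 1
      else 0) : Matrix (Fin n) (Fin n) ℝ) = W n := by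
  ext i j : 1
  by_cases h : i = j
  · subst h
    rw [Matrix.charmatrix_apply_eq]
    simp only [W, Matrix.of_apply, if_pos rfl]
    split_ifs <;> simp
  · rw [Matrix.charmatrix_apply_ne _ _ _ h]
    simp only [W, Matrix.of_apply, if_neg h]
    split_ifs <;> simp

end WheelCharpoly

open WheelCharpoly in
theorem charpoly_wheel_twisted (n : ℕ) (hn : 3 ≤ n)
    (f : ℕ → Polynomial ℝ)
    (hf1 : f 1 = 1) (hf2 : f 2 = Polynomial.X)
    (hf : ∀ k, 2 ≤ k → f (k + 1) = Polynomial.X * f k + f (k - 1)) :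
    (Matrix.of (fun i j : Fin n =>
      if i = j then (if i.val = 0 then (1 : ℝ) else 0)
      else if j.val = i.val + 1 then 1
      else if i.val = j.val + 1 then -1
      else if i.val = 0 ∧ j.val = n - 1 then -1
      else if i.val = n - 1 ∧ j.val = 0 then 1
      else 0) : Matrix (Fin n) (Fin n) ℝ).charpoly
      = (Polynomial.X - 1) * f n + 2 * f (n - 1) + (-1) ^ (n + 1) - 1 := by
  have hFf : ∀ m, Fp m = f (m + 1) := by
    intro m
    induction m using Nat.strong_induction_on with
    | _ m ih =>
      match m with
      | 0 => exact hf1.symm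
      | 1 => exact hf2.symm
      | (j+2) =>
        rw [hf (j+2) (by omega), show j + 2 - 1 = j + 1 from rfl]
        show Polynomial.X * Fp (j+1) + Fp j = _
        rw [ih (j+1) (by omega), ih j (by omega)]
  obtain ⟨k, rfl⟩ : ∃ k, n = k + 3 := ⟨n - 3, by omega⟩
  rw [show (Matrix.of (fun i j : Fin (k+3) =>
      if i = j then (if i.val = 0 then (1 : ℝ) else 0)
      else if j.val = i.val + 1 then 1
      else if i.val = j.val + 1 then -1
      else if i.val = 0 ∧ j.val = (k+3) - 1 then -1
      else if i.val = (k+3) - 1 ∧ j.val = 0 then 1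
      else 0) : Matrix (Fin (k+3)) (Fin (k+3)) ℝ).charpoly
    = (Matrix.charmatrix _).det from rfl, charm_eq (k+3), w_det k]
  rw [hFf (k+2), hFf (k+1)]
  have hpow : ((-1 : Polynomial ℝ)) ^ (k + 3 + 1) = (-1) ^ k := by
    rw [show k + 3 + 1 = k + 4 from rfl, pow_add]
    norm_num
  rw [hpow]
  norm_num
end

section
/- Let T_n (n ≥ 3) be the caterpillar tree on n vertices obtained from a path v_2 v_3 ⋯ v_n by attaching a pendant vertex v_1 to v_3. Then the number of perfect matchings of the Cartesian product P_2 × T_n equals the (n−1)-th Lucas number ℓ_{n−1}, where ℓ_1 = 1, ℓ_2 = 3. -/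
open SimpleGraph Finset

/-- the caterpillar graph -/
def cat (n : ℕ) : SimpleGraph (Fin n) := SimpleGraph.fromRel
  (fun i j => (1 ≤ i.val ∧ j.val = i.val + 1) ∨ (i.val = 0 ∧ j.val = 2))

abbrev PG (n : ℕ) : SimpleGraph (Fin 2 × Fin n) := (SimpleGraph.pathGraph 2).boxProd (cat n)

/-- natural-number version of caterpillar adjacency -/
def catE (i j : ℕ) : Prop :=
  (1 ≤ i ∧ j = i + 1) ∨ (1 ≤ j ∧ i = j + 1) ∨ (i = 0 ∧ j = 2) ∨ (j = 0 ∧ i = 2)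

/-- configurations: matchings of the caterpillar, as edge index sets -/
def conf (m : ℕ) : Finset (Finset ℕ) := (Finset.range m).powerset.filter
  (fun A => (∀ i ∈ A, i + 1 ∉ A) ∧ ¬(0 ∈ A ∧ 2 ∈ A))

lemma mem_conf {m : ℕ} {A : Finset ℕ} :
    A ∈ conf m ↔ (∀ i ∈ A, i < m) ∧ (∀ i ∈ A, i + 1 ∉ A) ∧ ¬(0 ∈ A ∧ 2 ∈ A) := by
  simp [conf, Finset.mem_filter, Finset.subset_iff, and_assoc]

/-- column i is covered by edge set A -/
def covP (A : Finset ℕ) (i : ℕ) : Prop :=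
  i ∈ A ∨ (2 ≤ i ∧ i - 1 ∈ A) ∨ (i = 2 ∧ 0 ∈ A)

/-- columns i j are matched horizontally by A -/
def hadjP (A : Finset ℕ) (i j : ℕ) : Prop :=
  (1 ≤ i ∧ j = i + 1 ∧ i ∈ A) ∨ (1 ≤ j ∧ i = j + 1 ∧ j ∈ A) ∨
  (i = 0 ∧ j = 2 ∧ 0 ∈ A) ∨ (i = 2 ∧ j = 0 ∧ 0 ∈ A)

lemma hadjP_symm {A : Finset ℕ} {i j : ℕ} (h : hadjP A i j) : hadjP A j i := by
  unfold hadjP at *; tauto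

lemma hadjP_covP {A : Finset ℕ} {i j : ℕ} (h : hadjP A i j) : covP A i := by
  rcases h with ⟨h1, h2, h3⟩ | ⟨h1, h2, h3⟩ | ⟨h1, h2, h3⟩ | ⟨h1, h2, h3⟩
  · exact Or.inl h3
  · exact Or.inr (Or.inl ⟨by omega, by rw [h2]; simpa⟩)
  · exact Or.inl (h1 ▸ h3)
  · exact Or.inr (Or.inr ⟨h1, h3⟩)

lemma hadjP_ne {A : Finset ℕ} {i j : ℕ} (h : hadjP A i j) : i ≠ j := by
  unfold hadjP at h; omega

lemma consec_false {A : Finset ℕ} (hnc : ∀ i ∈ A, i + 1 ∉ A) {x y : ℕ}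
    (hx : x ∈ A) (hy : y ∈ A) (e : y = x + 1) : False := hnc x hx (e ▸ hy)

lemma ztwo_false {A : Finset ℕ} (h02 : ¬(0 ∈ A ∧ 2 ∈ A)) {z : ℕ}
    (h0 : 0 ∈ A) (hz : z ∈ A) (e : z = 2) : False := h02 ⟨h0, e ▸ hz⟩

lemma hadj_unique {A : Finset ℕ} (hnc : ∀ i ∈ A, i + 1 ∉ A) (h02 : ¬(0 ∈ A ∧ 2 ∈ A))
    {i j j' : ℕ} (h : hadjP A i j) (h' : hadjP A i j') : j = j' := by
  rcases h with ⟨h1, h2, h3⟩ | ⟨h1, h2, h3⟩ | ⟨h1, h2, h3⟩ | ⟨h1, h2, h3⟩ <;>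
    rcases h' with ⟨g1, g2, g3⟩ | ⟨g1, g2, g3⟩ | ⟨g1, g2, g3⟩ | ⟨g1, g2, g3⟩ <;>
    first
      | omega
      | exact (consec_false hnc h3 g3 (by omega)).elim
      | exact (consec_false hnc g3 h3 (by omega)).elim
      | exact (ztwo_false h02 h3 g3 (by omega)).elim
      | exact (ztwo_false h02 g3 h3 (by omega)).elim

lemma fin2_ne_iff {a b : Fin 2} : a ≠ b ↔ b = a + 1 := by revert a b; decide

lemma fin2_eq_of_ne {a b c : Fin 2} (h1 : a ≠ c) (h2 : b ≠ c) : a = b := by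
  revert a b c; decide

lemma fin2_self_ne_add_one (a : Fin 2) : a ≠ a + 1 := by revert a; decide

lemma fin2_resolve {a b : Fin 2} (h : a ≠ b) : (a = 0 ∧ b = 1) ∨ (a = 1 ∧ b = 0) := by
  revert a b; decide

lemma path2_adj {a b : Fin 2} : (SimpleGraph.pathGraph 2).Adj a b ↔ a ≠ b := by
  rw [SimpleGraph.pathGraph_adj]
  simp only [ne_eq, Fin.ext_iff]
  omega

lemma cat_adj {n : ℕ} {i j : Fin n} : (cat n).Adj i j ↔ catE i.val j.val := by
  constructor
  · rintro ⟨hne, h⟩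
    unfold catE; tauto
  · intro h
    refine ⟨fun he => by rw [he] at h; unfold catE at h; omega, ?_⟩
    unfold catE at h; tauto

lemma PG_adj {n : ℕ} {x y : Fin 2 × Fin n} :
    (PG n).Adj x y ↔ (x.1 ≠ y.1 ∧ x.2 = y.2) ∨ (x.1 = y.1 ∧ catE x.2.val y.2.val) := by
  rw [SimpleGraph.boxProd_adj, path2_adj, cat_adj]
  tauto

/-- the map ℕ → Fin n -/
def nf (n : ℕ) (hn : 3 ≤ n) (k : ℕ) : Fin n := ⟨k % n, Nat.mod_lt _ (by omega)⟩

lemma nf_val {n : ℕ} (hn : 3 ≤ n) {k : ℕ} (h : k < n) : (nf n hn k).val = k :=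
  Nat.mod_eq_of_lt h

lemma nf_eq {n : ℕ} (hn : 3 ≤ n) {k : ℕ} {i : Fin n} (h : i.val = k) : nf n hn k = i := by
  apply Fin.ext; rw [nf_val hn (h ▸ i.isLt)]; omega

/-- the subgraph associated to a configuration -/
def msub (n : ℕ) (hn : 3 ≤ n) (A : Finset ℕ) (hA : A ∈ conf (n - 1)) :
    (PG n).Subgraph where
  verts := Set.univ
  Adj x y := (x.2 = y.2 ∧ x.1 ≠ y.1 ∧ ¬ covP A x.2.val) ∨ (x.1 = y.1 ∧ hadjP A x.2.val y.2.val)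
  adj_sub := by
    rintro ⟨a, i⟩ ⟨b, j⟩ (⟨h1, h2, h3⟩ | ⟨h1, h2⟩)
    · exact PG_adj.mpr (Or.inl ⟨h2, h1⟩)
    · refine PG_adj.mpr (Or.inr ⟨h1, ?_⟩)
      unfold hadjP at h2; unfold catE; tauto
  edge_vert := fun _ => Set.mem_univ _
  symm := by
    constructor
    rintro ⟨a, i⟩ ⟨b, j⟩ (⟨h1, h2, h3⟩ | ⟨h1, h2⟩)
    · exact Or.inl ⟨h1.symm, h2.symm, h1 ▸ h3⟩
    · exact Or.inr ⟨h1.symm, hadjP_symm h2⟩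

lemma msub_adj {n : ℕ} (hn : 3 ≤ n) {A : Finset ℕ} (hA : A ∈ conf (n - 1))
    {x y : Fin 2 × Fin n} :
    (msub n hn A hA).Adj x y ↔
      (x.2 = y.2 ∧ x.1 ≠ y.1 ∧ ¬ covP A x.2.val) ∨ (x.1 = y.1 ∧ hadjP A x.2.val y.2.val) :=
  Iff.rfl

lemma msub_isPM {n : ℕ} (hn : 3 ≤ n) {A : Finset ℕ} (hA : A ∈ conf (n - 1)) :
    (msub n hn A hA).IsPerfectMatching := by
  obtain ⟨hb, hnc, h02⟩ := mem_conf.mp hA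
  constructor
  · rintro ⟨a, i⟩ -
    by_cases hcov : covP A i.val
    · -- horizontal partner
      have hex : ∃ t, t < n ∧ hadjP A i.val t := by
        rcases hcov with hc | ⟨hc1, hc2⟩ | ⟨hc1, hc2⟩
        · by_cases hi0 : i.val = 0
          · exact ⟨2, by omega, Or.inr (Or.inr (Or.inl ⟨hi0, rfl, hi0 ▸ hc⟩))⟩
          · exact ⟨i.val + 1, by have := hb _ hc; omega,
              Or.inl ⟨by omega, rfl, hc⟩⟩
        · exact ⟨i.val - 1, by have := i.isLt; omega,
            Or.inr (Or.inl ⟨by omega, by omega, hc2⟩)⟩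
        · exact ⟨0, by omega, Or.inr (Or.inr (Or.inr ⟨hc1, rfl, hc2⟩))⟩
      obtain ⟨t, ht, hadj⟩ := hex
      refine ⟨(a, nf n hn t), Or.inr ⟨rfl, by rwa [nf_val hn ht]⟩, ?_⟩
      rintro ⟨b, j⟩ (⟨g1, g2, g3⟩ | ⟨g1, g2⟩)
      · exact absurd hcov g3
      · have hadj' : hadjP A i.val (nf n hn t).val := by rwa [nf_val hn ht]
        have hjt : j.val = (nf n hn t).val := hadj_unique hnc h02 g2 hadj'
        simp only [Prod.mk.injEq]
        exact ⟨g1.symm, Fin.ext hjt⟩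
    · -- vertical partner
      refine ⟨(a + 1, i), Or.inl ⟨rfl, (fin2_self_ne_add_one a), hcov⟩, ?_⟩
      rintro ⟨b, j⟩ (⟨g1, g2, g3⟩ | ⟨g1, g2⟩)
      · have : b = a + 1 := fin2_ne_iff.mp g2
        simp only [Prod.mk.injEq]
        exact ⟨this, g1.symm⟩
      · exact absurd (hadjP_covP g2) hcov
  · intro v; exact Set.mem_univ v
section Forcing

variable {n : ℕ} {M : (PG n).Subgraph}

lemma M_partner (hM : M.IsPerfectMatching) (v : Fin 2 × Fin n) : ∃ w, M.Adj v w :=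
  (hM.1 (hM.2 v)).exists

lemma M_unique (hM : M.IsPerfectMatching) {v w u : Fin 2 × Fin n}
    (h1 : M.Adj v w) (h2 : M.Adj v u) : w = u :=
  (hM.1 (M.edge_vert h1)).unique h1 h2

lemma adj_cases {a b : Fin 2} {i j : Fin n} (h : M.Adj (a, i) (b, j)) :
    (b ≠ a ∧ j = i) ∨ (b = a ∧ catE i.val j.val) := by
  have := PG_adj.mp (M.adj_sub h)
  simp only at this
  rcases this with ⟨h1, h2⟩ | ⟨h1, h2⟩
  · exact Or.inl ⟨fun e => h1 e.symm, h2.symm⟩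
  · exact Or.inr ⟨h1.symm, h2⟩

/-- mirror for the special edge 0–2 -/
lemma mirror0 (hM : M.IsPerfectMatching) {a b : Fin 2} {z t : Fin n}
    (hz : z.val = 0) (ht : t.val = 2) (h : M.Adj (a, z) (a, t)) : M.Adj (b, z) (b, t) := by
  by_cases hba : b = a
  · exact hba ▸ h
  obtain ⟨⟨w1, w2⟩, hw⟩ := M_partner hM (b, z)
  rcases adj_cases hw with ⟨g1, g2⟩ | ⟨g1, g2⟩
  · -- rung at column 0 : w = (a, z), but (a, z) is matched to (a, t)
    have hw1 : w1 = a := fin2_eq_of_ne g1 (fun x => hba x.symm)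
    rw [hw1, g2] at hw
    have heq := M_unique hM h hw.symm
    rw [Prod.mk.injEq] at heq
    exact (hba heq.1.symm).elim
  · rw [g1] at hw
    have hv : w2.val = 2 := by unfold catE at g2; omega
    have hw2 : w2 = t := Fin.ext (by omega)
    exact hw2 ▸ hw

/-- downward induction: mirror for path edges i–(i+1), i ≥ 1 -/
lemma mirror_path (hM : M.IsPerfectMatching) : ∀ d i, n ≤ i + d →
    ∀ (a b : Fin 2) (c e : Fin n), c.val = i → e.val = i + 1 → 1 ≤ i →
      M.Adj (a, c) (a, e) → M.Adj (b, c) (b, e) := by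
  intro d
  induction d with
  | zero => intro i hi a b c e hc he h1 h; exact absurd e.isLt (by omega)
  | succ d IH =>
    intro i hi a b c e hc he h1 h
    by_cases hba : b = a
    · exact hba ▸ h
    obtain ⟨⟨w1, w2⟩, hw⟩ := M_partner hM (b, e)
    rcases adj_cases hw with ⟨g1, g2⟩ | ⟨g1, g2⟩
    · -- rung at column i+1 : w = (a, e), but (a, e) is matched to (a, c)
      have hw1 : w1 = a := fin2_eq_of_ne g1 (fun x => hba x.symm)
      rw [hw1, g2] at hw
      have heq := M_unique hM h.symm hw.symm
      rw [Prod.mk.injEq] at heq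
      exact (hba heq.1.symm).elim
    · rw [g1] at hw
      rcases g2 with ⟨p1, p2⟩ | ⟨p1, p2⟩ | ⟨p1, p2⟩ | ⟨p1, p2⟩
      · -- w2.val = i + 2 : use IH at i+1 to pull down to row a, contradiction
        have hup : M.Adj (a, e) (a, w2) :=
          IH (i + 1) (by omega) b a e w2 he (by omega) (by omega) hw
        have heq := M_unique hM h.symm hup
        rw [Prod.mk.injEq] at heq
        have := congrArg Fin.val heq.2
        omega
      · -- w2.val = i : w2 = c, done
        have hw2 : w2 = c := Fin.ext (by omega)
        exact (hw2 ▸ hw).symm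
      · omega
      · -- w2.val = 0, e.val = 2, so i = 1; column 0 would be unmatched
        exfalso
        obtain ⟨⟨u1, u2⟩, hu⟩ := M_partner hM (a, w2)
        rcases adj_cases hu with ⟨q1, q2⟩ | ⟨q1, q2⟩
        · -- rung : u = (b, w2), but (b, w2) is matched to (b, e)
          have hu1 : u1 = b := fin2_eq_of_ne q1 hba
          rw [hu1, q2] at hu
          have heq := M_unique hM hw.symm hu.symm
          rw [Prod.mk.injEq] at heq
          exact hba heq.1
        · rw [q1] at hu
          have hv : u2.val = 2 := by unfold catE at q2; omega
          have hu2 : u2 = e := Fin.ext (by omega)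
          subst hu2
          have heq := M_unique hM hu.symm (h.symm)
          rw [Prod.mk.injEq] at heq
          have := congrArg Fin.val heq.2
          omega

/-- full mirror lemma -/
lemma mirror (hM : M.IsPerfectMatching) {a b : Fin 2} {c e : Fin n}
    (h : M.Adj (a, c) (a, e)) : M.Adj (b, c) (b, e) := by
  rcases adj_cases h with ⟨g1, g2⟩ | ⟨g1, g2⟩
  · exact absurd rfl g1
  · rcases g2 with ⟨p1, p2⟩ | ⟨p1, p2⟩ | ⟨p1, p2⟩ | ⟨p1, p2⟩
    · exact mirror_path hM n c.val (by omega) a b c e rfl (by omega) p1 h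
    · exact (mirror_path hM n e.val (by omega) a b e c rfl (by omega) p1 h.symm).symm
    · exact mirror0 hM p1 p2 h
    · exact (mirror0 hM p1 p2 h.symm).symm

end Forcing
open Classical in
/-- row-0 horizontal edges of a matching, as a configuration -/
noncomputable def phi (n : ℕ) (hn : 3 ≤ n) (M : (PG n).Subgraph) : Finset ℕ :=
  (Finset.range (n - 1)).filter fun e =>
    if e = 0 then M.Adj (0, nf n hn 0) (0, nf n hn 2)
    else M.Adj (0, nf n hn e) (0, nf n hn (e + 1))

section Phi

variable {n : ℕ} (hn : 3 ≤ n) {M : (PG n).Subgraph}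

lemma mem_phi_zero : 0 ∈ phi n hn M ↔ M.Adj (0, nf n hn 0) (0, nf n hn 2) := by
  classical
  rw [phi, Finset.mem_filter]
  simp only [if_pos rfl, Finset.mem_range]
  exact and_iff_right (by omega)

lemma mem_phi_pos {e : ℕ} (he : 1 ≤ e) :
    e ∈ phi n hn M ↔ e < n - 1 ∧ M.Adj (0, nf n hn e) (0, nf n hn (e + 1)) := by
  classical
  rw [phi, Finset.mem_filter, if_neg (by omega), Finset.mem_range]

lemma phi_lt {e : ℕ} (h : e ∈ phi n hn M) : e < n - 1 := by
  classical
  exact Finset.mem_range.mp (Finset.mem_filter.mp h).1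

lemma phi_edge_pos {e : ℕ} (he : 1 ≤ e) (hmem : e ∈ phi n hn M) {c d : Fin n}
    (hc : c.val = e) (hd : d.val = e + 1) : M.Adj (0, c) (0, d) := by
  have h := ((mem_phi_pos hn he).mp hmem).2
  rwa [nf_eq hn hc, nf_eq hn hd] at h

lemma phi_edge_zero (hmem : 0 ∈ phi n hn M) {c d : Fin n}
    (hc : c.val = 0) (hd : d.val = 2) : M.Adj (0, c) (0, d) := by
  have h := (mem_phi_zero hn).mp hmem
  rwa [nf_eq hn hc, nf_eq hn hd] at h

lemma phi_mem_pos_of_edge {e : ℕ} (he : 1 ≤ e) {c d : Fin n}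
    (hc : c.val = e) (hd : d.val = e + 1) (h : M.Adj (0, c) (0, d)) : e ∈ phi n hn M :=
  (mem_phi_pos hn he).mpr ⟨by have := d.isLt; omega, by rwa [nf_eq hn hc, nf_eq hn hd]⟩

lemma phi_mem_zero_of_edge {c d : Fin n}
    (hc : c.val = 0) (hd : d.val = 2) (h : M.Adj (0, c) (0, d)) : 0 ∈ phi n hn M :=
  (mem_phi_zero hn).mpr (by rwa [nf_eq hn hc, nf_eq hn hd])

/-- a rung at column i gives the row-0 ↔ row-1 rung edge -/
lemma rung_normalize {a b : Fin 2} {i : Fin n} (hab : a ≠ b) (h : M.Adj (a, i) (b, i)) :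
    M.Adj ((0 : Fin 2), i) ((1 : Fin 2), i) := by
  rcases fin2_resolve hab with ⟨ha, hb⟩ | ⟨ha, hb⟩
  · exact ha ▸ hb ▸ h
  · exact (ha ▸ hb ▸ h).symm

lemma rung_horiz_clash (hM : M.IsPerfectMatching) {i d : Fin n}
    (hr : M.Adj ((0 : Fin 2), i) ((1 : Fin 2), i))
    (hh : M.Adj ((0 : Fin 2), i) ((0 : Fin 2), d)) : False := by
  have heq := M_unique hM hr hh
  rw [Prod.mk.injEq] at heq
  exact absurd heq.1 (by decide)

lemma phi_mem_conf (hM : M.IsPerfectMatching) : phi n hn M ∈ conf (n - 1) := by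
  rw [mem_conf]
  refine ⟨fun e he => phi_lt hn he, ?_, ?_⟩
  · intro e he he1
    have hb1 := phi_lt hn he1
    by_cases he0 : e = 0
    · subst he0
      have h0 := phi_edge_zero hn he (c := nf n hn 0) (d := nf n hn 2)
        (nf_val hn (by omega)) (nf_val hn (by omega))
      have h1 := phi_edge_pos hn (by omega) he1 (c := nf n hn 1) (d := nf n hn 2)
        (nf_val hn (by omega)) (nf_val hn (by omega))
      have heq := M_unique hM h0.symm h1.symm
      rw [Prod.mk.injEq] at heq
      have := congrArg Fin.val heq.2
      rw [nf_val hn (by omega), nf_val hn (by omega)] at this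
      omega
    · have h0 := phi_edge_pos hn (by omega) he (c := nf n hn e) (d := nf n hn (e + 1))
        (nf_val hn (by omega)) (nf_val hn (by omega))
      have h1 := phi_edge_pos hn (by omega) he1 (c := nf n hn (e + 1)) (d := nf n hn (e + 2))
        (nf_val hn (by omega)) (nf_val hn (by omega))
      have heq := M_unique hM h0.symm h1
      rw [Prod.mk.injEq] at heq
      have := congrArg Fin.val heq.2
      rw [nf_val hn (by omega), nf_val hn (by omega)] at this
      omega
  · rintro ⟨h0m, h2m⟩
    have hb2 := phi_lt hn h2m
    have h0 := phi_edge_zero hn h0m (c := nf n hn 0) (d := nf n hn 2)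
      (nf_val hn (by omega)) (nf_val hn (by omega))
    have h2 := phi_edge_pos hn (by omega) h2m (c := nf n hn 2) (d := nf n hn 3)
      (nf_val hn (by omega)) (nf_val hn (by omega))
    have heq := M_unique hM h0.symm h2
    rw [Prod.mk.injEq] at heq
    have := congrArg Fin.val heq.2
    rw [nf_val hn (by omega), nf_val hn (by omega)] at this
    omega

lemma M_eq (hM : M.IsPerfectMatching) :
    M = msub n hn (phi n hn M) (phi_mem_conf hn hM) := by
  apply SimpleGraph.Subgraph.ext
  · rw [SimpleGraph.Subgraph.isSpanning_iff.mp hM.2]; rfl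
  · funext x y
    rcases x with ⟨a, i⟩; rcases y with ⟨b, j⟩
    apply propext
    rw [msub_adj hn]
    simp only
    constructor
    · intro h
      rcases adj_cases h with ⟨g1, g2⟩ | ⟨g1, g2⟩
      · -- rung
        subst g2
        have hr := rung_normalize (fun x => g1 x.symm) h
        refine Or.inl ⟨rfl, fun x => g1 x.symm, ?_⟩
        rintro (hc | ⟨hc1, hc2⟩ | ⟨hc1, hc2⟩)
        · by_cases hj0 : j.val = 0
          · exact rung_horiz_clash hM hr
              (phi_edge_zero hn (by rw [hj0] at hc; exact hc) (c := j) hj0 (nf_val hn (by omega)))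
          · have hlt := phi_lt hn hc
            exact rung_horiz_clash hM hr
              (phi_edge_pos hn (by omega) hc (c := j) rfl (nf_val hn (by omega)))
        · exact rung_horiz_clash hM hr
            (phi_edge_pos hn (by omega) hc2 (c := nf n hn (j.val - 1)) (d := j)
              (nf_val hn (by omega)) (by omega)).symm
        · exact rung_horiz_clash hM hr
            (phi_edge_zero hn hc2 (c := nf n hn 0) (d := j)
              (nf_val hn (by omega)) hc1).symm
      · -- horizontal
        subst g1
        have h0 : M.Adj ((0 : Fin 2), i) ((0 : Fin 2), j) := mirror hM h
        refine Or.inr ⟨rfl, ?_⟩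
        rcases g2 with ⟨p1, p2⟩ | ⟨p1, p2⟩ | ⟨p1, p2⟩ | ⟨p1, p2⟩
        · exact Or.inl ⟨p1, p2, phi_mem_pos_of_edge hn p1 rfl p2 h0⟩
        · exact Or.inr (Or.inl ⟨p1, p2, phi_mem_pos_of_edge hn p1 rfl p2 h0.symm⟩)
        · exact Or.inr (Or.inr (Or.inl ⟨p1, p2, phi_mem_zero_of_edge hn p1 p2 h0⟩))
        · exact Or.inr (Or.inr (Or.inr ⟨p2, p1, phi_mem_zero_of_edge hn p1 p2 h0.symm⟩))
    · rintro (⟨h1, h2, h3⟩ | ⟨h1, h2⟩)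
      · -- rung
        obtain ⟨⟨w1, w2⟩, hw⟩ := M_partner hM (a, i)
        rcases adj_cases hw with ⟨g1, g2⟩ | ⟨g1, g2⟩
        · have hw1 : w1 = b := fin2_eq_of_ne g1 (fun x => h2 x.symm)
          rw [hw1, g2] at hw
          have hij : i = j := h1
          exact hij ▸ hw
        · exfalso
          rw [g1] at hw
          have h0 : M.Adj ((0 : Fin 2), i) ((0 : Fin 2), w2) := mirror hM hw
          apply h3
          rcases g2 with ⟨p1, p2⟩ | ⟨p1, p2⟩ | ⟨p1, p2⟩ | ⟨p1, p2⟩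
          · exact Or.inl (phi_mem_pos_of_edge hn p1 rfl p2 h0)
          · refine Or.inr (Or.inl ⟨by omega, ?_⟩)
            rw [show i.val - 1 = w2.val by omega]
            exact phi_mem_pos_of_edge hn p1 rfl p2 h0.symm
          · refine Or.inl ?_
            rw [p1]
            exact phi_mem_zero_of_edge hn p1 p2 h0
          · exact Or.inr (Or.inr ⟨p2, phi_mem_zero_of_edge hn p1 p2 h0.symm⟩)
      · -- horizontal
        have hab : a = b := h1
        subst hab
        rcases h2 with ⟨p1, p2, p3⟩ | ⟨p1, p2, p3⟩ | ⟨p1, p2, p3⟩ | ⟨p1, p2, p3⟩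
        · exact mirror hM (phi_edge_pos hn p1 p3 rfl p2)
        · exact (mirror hM (phi_edge_pos hn p1 p3 rfl p2)).symm
        · exact mirror hM (phi_edge_zero hn p3 p1 p2)
        · exact (mirror hM (phi_edge_zero hn p3 p2 p1)).symm
end Phi
lemma phi_msub {n : ℕ} (hn : 3 ≤ n) {A : Finset ℕ} (hA : A ∈ conf (n - 1)) :
    phi n hn (msub n hn A hA) = A := by
  obtain ⟨hb, hnc, h02⟩ := mem_conf.mp hA
  ext e
  by_cases he : e = 0
  · subst he
    rw [mem_phi_zero hn, msub_adj hn]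
    simp only [nf_val hn (show 0 < n by omega), nf_val hn (show 2 < n by omega)]
    constructor
    · rintro (⟨g1, g2, g3⟩ | ⟨g1, g2⟩)
      · exact absurd (congrArg Fin.val g1)
          (by rw [nf_val hn (show 0 < n by omega), nf_val hn (show 2 < n by omega)]; omega)
      · rcases g2 with ⟨p1, p2, p3⟩ | ⟨p1, p2, p3⟩ | ⟨p1, p2, p3⟩ | ⟨p1, p2, p3⟩ <;>
          first | omega | exact p3
    · intro hmem
      refine Or.inr ⟨by trivial, ?_⟩
      exact Or.inr (Or.inr (Or.inl ⟨rfl, rfl, hmem⟩))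
  · rw [mem_phi_pos hn (by omega)]
    constructor
    · rintro ⟨hlt, hadj⟩
      rw [msub_adj hn] at hadj
      simp only [nf_val hn (show e < n by omega), nf_val hn (show e + 1 < n by omega)] at hadj
      rcases hadj with ⟨g1, g2, g3⟩ | ⟨g1, g2⟩
      · exact absurd (congrArg Fin.val g1)
          (by rw [nf_val hn (show e < n by omega), nf_val hn (show e + 1 < n by omega)]; omega)
      · rcases g2 with ⟨p1, p2, p3⟩ | ⟨p1, p2, p3⟩ | ⟨p1, p2, p3⟩ | ⟨p1, p2, p3⟩ <;>
          first | omega | exact p3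
    · intro hmem
      have hbe := hb e hmem
      refine ⟨hbe, ?_⟩
      rw [msub_adj hn]
      refine Or.inr ⟨rfl, ?_⟩
      rw [nf_val hn (show e < n by omega), nf_val hn (show e + 1 < n by omega)]
      exact Or.inl ⟨by omega, rfl, hmem⟩

/- ### counting configurations -/

lemma conf_two : (conf 2).card = 3 := by decide

lemma conf_three : (conf 3).card = 4 := by decide

lemma conf_split (m : ℕ) (hm : 4 ≤ m) :
    conf m = conf (m - 1) ∪ (conf (m - 2)).image (insert (m - 1)) := by
  ext A
  simp only [Finset.mem_union, Finset.mem_image, mem_conf]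
  constructor
  · rintro ⟨hb, hnc, h02⟩
    by_cases hm1 : m - 1 ∈ A
    · right
      refine ⟨A.erase (m - 1), ⟨?_, ?_, ?_⟩, Finset.insert_erase hm1⟩
      · intro i hi
        have h1 := Finset.mem_of_mem_erase hi
        have h2 := Finset.ne_of_mem_erase hi
        have h3 : i ≠ m - 2 := by
          intro e
          exact hnc i h1 (by rw [e, show m - 2 + 1 = m - 1 by omega]; exact hm1)
        have := hb i h1
        omega
      · exact fun i hi hi1 =>
          hnc i (Finset.mem_of_mem_erase hi) (Finset.mem_of_mem_erase hi1)
      · rintro ⟨g0, g2⟩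
        exact h02 ⟨Finset.mem_of_mem_erase g0, Finset.mem_of_mem_erase g2⟩
    · left
      refine ⟨fun i hi => ?_, hnc, h02⟩
      have := hb i hi
      have : i ≠ m - 1 := fun e => hm1 (e ▸ hi)
      omega
  · rintro (⟨hb, hnc, h02⟩ | ⟨B, ⟨hb, hnc, h02⟩, rfl⟩)
    · exact ⟨fun i hi => by have := hb i hi; omega, hnc, h02⟩
    · refine ⟨?_, ?_, ?_⟩
      · intro i hi
        rcases Finset.mem_insert.mp hi with rfl | hi
        · omega
        · have := hb i hi; omega
      · intro i hi hi1
        rcases Finset.mem_insert.mp hi with rfl | hi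
        · rcases Finset.mem_insert.mp hi1 with e | hi1
          · omega
          · have := hb _ hi1; omega
        · rcases Finset.mem_insert.mp hi1 with e | hi1
          · have := hb i hi; omega
          · exact hnc i hi hi1
      · rintro ⟨g0, g2⟩
        rcases Finset.mem_insert.mp g0 with e0 | g0
        · omega
        rcases Finset.mem_insert.mp g2 with e2 | g2
        · omega
        exact h02 ⟨g0, g2⟩

lemma conf_rec (m : ℕ) (hm : 4 ≤ m) :
    (conf m).card = (conf (m - 1)).card + (conf (m - 2)).card := by
  rw [conf_split m hm]
  rw [Finset.card_union_of_disjoint, Finset.card_image_of_injOn]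
  · intro A hA B hB hAB
    simp only [Finset.coe_sort_coe, Finset.mem_coe] at hA hB
    have hAm : m - 1 ∉ A := fun h => by have := (mem_conf.mp hA).1 _ h; omega
    have hBm : m - 1 ∉ B := fun h => by have := (mem_conf.mp hB).1 _ h; omega
    calc A = (insert (m - 1) A).erase (m - 1) := (Finset.erase_insert hAm).symm
    _ = (insert (m - 1) B).erase (m - 1) := by rw [hAB]
    _ = B := Finset.erase_insert hBm
  · rw [Finset.disjoint_left]
    intro A hA hA'
    rcases Finset.mem_image.mp hA' with ⟨B, hB, rfl⟩
    have := (mem_conf.mp hA).1 _ (Finset.mem_insert_self (m - 1) B)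
    omega

lemma conf_card (l : ℕ → ℕ) (hl1 : l 1 = 1) (hl2 : l 2 = 3)
    (hl : ∀ k, 3 ≤ k → l k = l (k - 1) + l (k - 2)) :
    ∀ m, 2 ≤ m → (conf m).card = l m := by
  intro m
  induction m using Nat.strong_induction_on with
  | _ m IH =>
    intro hm
    by_cases h2 : m = 2
    · rw [h2, conf_two, hl2]
    by_cases h3 : m = 3
    · rw [h3, conf_three, hl 3 (by omega), hl2, hl1]
    have h4 : 4 ≤ m := by omega
    rw [conf_rec m h4, IH (m - 1) (by omega) (by omega), IH (m - 2) (by omega) (by omega),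
      hl m (by omega)]

theorem perfect_matchings_caterpillar (n : ℕ) (hn : 3 ≤ n)
    (l : ℕ → ℕ) (hl1 : l 1 = 1) (hl2 : l 2 = 3)
    (hl : ∀ k, 3 ≤ k → l k = l (k - 1) + l (k - 2)) :
    let T : SimpleGraph (Fin n) := SimpleGraph.fromRel
      (fun i j => (1 ≤ i.val ∧ j.val = i.val + 1) ∨ (i.val = 0 ∧ j.val = 2))
    {M : ((SimpleGraph.pathGraph 2).boxProd T).Subgraph |
      M.IsPerfectMatching}.ncard = l (n - 1) := by
  intro T
  show {M : (PG n).Subgraph | M.IsPerfectMatching}.ncard = l (n - 1)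
  have e : {M : (PG n).Subgraph | M.IsPerfectMatching} ≃ {A // A ∈ conf (n - 1)} :=
    { toFun := fun M => ⟨phi n hn M.1, phi_mem_conf hn M.2⟩
      invFun := fun A => ⟨msub n hn A.1 A.2, msub_isPM hn A.2⟩
      left_inv := fun M => Subtype.ext (M_eq hn M.2).symm
      right_inv := fun A => Subtype.ext (phi_msub hn A.2) }
  rw [← Nat.card_coe_set_eq, Nat.card_congr e, Nat.card_eq_fintype_card,
    Fintype.card_coe, conf_card l hl1 hl2 hl (n - 1) (by omega)]
end
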